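/- arXiv:1312.6503 — 4 statements merged into one kernel-verified Lean document; each statement's English description precedes it below -/
import Mathlib

section
/- If a graph G admits a Grundy partial k-coloring (i.e., a Grundy k-coloring of some induced subgraph of G), then the Grundy number of G is at least k. -/
variable {V : Type*}

/-- `c` is a Grundy coloring of `G`: a proper coloring with positive integer
colors in which every vertex of color `i` has, for each `1 ≤ j < i`, a neighbor
of color `j`. -/
def IsGrundyColoring (G : SimpleGraph V) (c : V → ℕ) : Prop :=
  (∀ v, 1 ≤ c v) ∧
  (∀ v w, G.Adj v w → c v ≠ c w) ∧
  (∀ v j, 1 ≤ j → j < c v → ∃ u, G.Adj v u ∧ c u = j)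

/-- `c` is a Grundy `k`-coloring of `G`: a Grundy coloring using exactly the
colors `1, …, k` (surjectively). -/
def IsGrundyKColoring (G : SimpleGraph V) (c : V → ℕ) (k : ℕ) : Prop :=
  IsGrundyColoring G c ∧ (∀ v, c v ≤ k) ∧ (∀ j, 1 ≤ j → j ≤ k → ∃ v, c v = j)

/-- `G` admits a Grundy `k`-coloring. -/
def GrundyColorable (G : SimpleGraph V) (k : ℕ) : Prop :=
  ∃ c : V → ℕ, IsGrundyKColoring G c k

/-- The Grundy number of `G`: the largest `k` such that `G` admits a Grundy
`k`-coloring. -/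
noncomputable def grundy (G : SimpleGraph V) : ℕ :=
  sSup {k | GrundyColorable G k}

/-- `X` is an independent module of `G`: an independent set of vertices all
having the same neighborhood. -/
def IndepModule (G : SimpleGraph V) (X : Set V) : Prop :=
  (∀ x ∈ X, ∀ y ∈ X, ¬ G.Adj x y) ∧
  (∀ x ∈ X, ∀ y ∈ X, ∀ z, G.Adj x z ↔ G.Adj y z)

/-- The neighborhood of `v` in `G` can be partitioned into `n` independent
modules of `G`. -/
def NbhdPartition (G : SimpleGraph V) (v : V) (n : ℕ) : Prop :=
  ∃ M : Fin n → Set V, (∀ i, IndepModule G (M i)) ∧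
    (∀ i j, i ≠ j → Disjoint (M i) (M j)) ∧
    (⋃ i, M i) = G.neighborSet v

/-- `G` contains an induced 4-cycle. -/
def HasInducedC4 (G : SimpleGraph V) : Prop :=
  ∃ a b c d : V, a ≠ b ∧ a ≠ c ∧ a ≠ d ∧ b ≠ c ∧ b ≠ d ∧ c ≠ d ∧
    G.Adj a b ∧ G.Adj b c ∧ G.Adj c d ∧ G.Adj d a ∧ ¬ G.Adj a c ∧ ¬ G.Adj b d

/-- `G` admits a partial Grundy `k`-coloring: a surjective proper coloring with
colors `1, …, k` such that every color class `j` contains a vertex having, for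
each `1 ≤ i < j`, a neighbor of color `i`. -/
def PartialGrundyColorable (G : SimpleGraph V) (k : ℕ) : Prop :=
  ∃ c : V → ℕ, (∀ v, 1 ≤ c v ∧ c v ≤ k) ∧
    (∀ v w, G.Adj v w → c v ≠ c w) ∧
    (∀ j, 1 ≤ j → j ≤ k →
      ∃ v, c v = j ∧ ∀ i, 1 ≤ i → i < j → ∃ u, G.Adj v u ∧ c u = i)

/-- The partial Grundy number of `G`. -/
noncomputable def partialGrundy (G : SimpleGraph V) : ℕ :=
  sSup {k | PartialGrundyColorable G k}

/-- Auxiliary: a Grundy-type partial coloring of `G` on the set `S`. -/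
def GAux (G : SimpleGraph V) (S : Set V) (c : V → ℕ) (k : ℕ) : Prop :=
  (∀ v ∈ S, 1 ≤ c v ∧ c v ≤ k) ∧
  (∀ v ∈ S, ∀ w ∈ S, G.Adj v w → c v ≠ c w) ∧
  (∀ v ∈ S, ∀ j, 1 ≤ j → j < c v → ∃ u ∈ S, G.Adj v u ∧ c u = j) ∧
  (∀ j, 1 ≤ j → j ≤ k → ∃ v ∈ S, c v = j)

lemma gaux_of_induce (G : SimpleGraph V) (S : Set V) (k : ℕ)
    (h : GrundyColorable (G.induce S) k) : ∃ c, GAux G S c k := by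
  obtain ⟨c, ⟨⟨h1, h2, h3⟩, h4, h5⟩⟩ := h
  classical
  refine ⟨fun v => if hv : v ∈ S then c ⟨v, hv⟩ else 0, ?_, ?_, ?_, ?_⟩
  · intro v hv; simp only [dif_pos hv]; exact ⟨h1 _, h4 _⟩
  · intro v hv w hw hadj
    simp only [dif_pos hv, dif_pos hw]
    exact h2 ⟨v, hv⟩ ⟨w, hw⟩ hadj
  · intro v hv j hj1 hj2
    simp only [dif_pos hv] at hj2
    obtain ⟨⟨u, hu⟩, hadj, hcu⟩ := h3 ⟨v, hv⟩ j hj1 hj2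
    exact ⟨u, hu, hadj, by simp [dif_pos hu, hcu]⟩
  · intro j hj1 hj2
    obtain ⟨⟨v, hv⟩, hcv⟩ := h5 j hj1 hj2
    exact ⟨v, hv, by simp [dif_pos hv, hcv]⟩

lemma gaux_extend [Fintype V] (G : SimpleGraph V) (S : Set V) (c : V → ℕ) (k : ℕ)
    (hA : GAux G S c k) (v : V) (hv : v ∉ S) :
    ∃ c' k', k ≤ k' ∧ GAux G (insert v S) c' k' := by
  classical
  obtain ⟨hb, hp, hg, hs⟩ := hA
  have hP : ∃ m, 1 ≤ m ∧ ∀ u ∈ S, G.Adj v u → c u ≠ m := by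
    refine ⟨k + 1, Nat.le_add_left 1 k, fun u hu _ h => ?_⟩
    have := (hb u hu).2; omega
  set m := Nat.find hP with hm
  obtain ⟨hm1, hmne⟩ := Nat.find_spec hP
  have hmk : m ≤ k + 1 := Nat.find_le ⟨Nat.le_add_left 1 k, fun u hu _ h => by
    have := (hb u hu).2; omega⟩
  refine ⟨Function.update c v m, max k m, le_max_left _ _, ?_, ?_, ?_, ?_⟩
  · intro w hw
    rcases hw with rfl | hw
    · simp [Function.update_self]; omega
    · have : w ≠ v := fun h => hv (h ▸ hw)
      rw [Function.update_of_ne this]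
      exact ⟨(hb w hw).1, le_trans (hb w hw).2 (le_max_left _ _)⟩
  · intro x hx w hw hadj
    by_cases hxv : x = v
    · have hw' : w ∈ S := by
        rcases hw with h | h
        · exact absurd hadj (by rw [hxv, h]; exact G.loopless.irrefl v)
        · exact h
      have hwv : w ≠ v := fun h => hv (h ▸ hw')
      rw [hxv, Function.update_self, Function.update_of_ne hwv]
      exact fun h => hmne w hw' (hxv ▸ hadj) h.symm
    · have hx' : x ∈ S := hx.resolve_left hxv
      rw [Function.update_of_ne hxv]
      by_cases hwv : w = v
      · rw [hwv, Function.update_self]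
        exact fun h => hmne x hx' (hwv ▸ hadj.symm) h
      · have hw' : w ∈ S := hw.resolve_left hwv
        rw [Function.update_of_ne hwv]
        exact hp x hx' w hw' hadj
  · intro x hx j hj1 hj2
    by_cases hxv : x = v
    · rw [hxv, Function.update_self] at hj2
      have := Nat.find_min hP (m := j) hj2
      push_neg at this
      obtain ⟨u, hu, hadj, hcu⟩ := this hj1
      have huv : u ≠ v := fun h => hv (h ▸ hu)
      exact ⟨u, Or.inr hu, hxv ▸ hadj, by rw [Function.update_of_ne huv]; exact hcu⟩
    · have hx : x ∈ S := hx.resolve_left hxv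
      rw [Function.update_of_ne hxv] at hj2
      obtain ⟨u, hu, hadj, hcu⟩ := hg x hx j hj1 hj2
      have huv : u ≠ v := fun h => hv (h ▸ hu)
      exact ⟨u, Or.inr hu, hadj, by rw [Function.update_of_ne huv]; exact hcu⟩
  · intro j hj1 hj2
    rcases le_or_gt j k with hjk | hjk
    · obtain ⟨w, hw, hcw⟩ := hs j hj1 hjk
      have hwv : w ≠ v := fun h => hv (h ▸ hw)
      exact ⟨w, Or.inr hw, by rw [Function.update_of_ne hwv]; exact hcw⟩
    · have : j = m := by omega
      exact ⟨v, Or.inl rfl, by rw [Function.update_self, this]⟩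

lemma gaux_univ [Fintype V] (G : SimpleGraph V) :
    ∀ n (S : Set V) (c : V → ℕ) (k : ℕ), Sᶜ.ncard = n → GAux G S c k →
    ∃ k', k ≤ k' ∧ GrundyColorable G k' := by
  intro n
  induction n with
  | zero =>
    intro S c k hn hA
    have hS : S = Set.univ := by
      classical
      have : Sᶜ = ∅ := (Set.ncard_eq_zero (Set.toFinite _)).mp hn
      simpa [Set.compl_empty_iff] using this
    subst hS
    obtain ⟨hb, hp, hg, hs⟩ := hA
    exact ⟨k, le_refl k, c, ⟨⟨fun v => (hb v trivial).1,
      fun x w h => hp x trivial w trivial h,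
      fun x j h1 h2 => by
        obtain ⟨u, _, hadj, hcu⟩ := hg x trivial j h1 h2
        exact ⟨u, hadj, hcu⟩⟩,
      fun v => (hb v trivial).2,
      fun j h1 h2 => by
        obtain ⟨w, _, hcw⟩ := hs j h1 h2
        exact ⟨w, hcw⟩⟩⟩
  | succ n ih =>
    intro S c k hn hA
    have hne : Sᶜ.Nonempty := by
      rw [← Set.ncard_pos (Set.toFinite _)] at *; omega
    obtain ⟨v, hv⟩ := hne
    obtain ⟨c', k', hk, hA'⟩ := gaux_extend G S c k hA v hv
    have hcard : (insert v S)ᶜ.ncard = n := by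
      classical
      have : (insert v S)ᶜ = Sᶜ \ {v} := by
        ext x; simp [Set.mem_insert_iff, and_comm]
      rw [this, Set.ncard_diff_singleton_of_mem hv, hn]
      omega
    obtain ⟨k'', hk'', hG⟩ := ih (insert v S) c' k' hcard hA'
    exact ⟨k'', le_trans hk hk'', hG⟩

lemma grundy_bdd [Fintype V] (G : SimpleGraph V) :
    BddAbove {k | GrundyColorable G k} := by
  refine ⟨Fintype.card V, fun k hk => ?_⟩
  obtain ⟨c, _, _, h5⟩ := hk
  classical
  choose f hf using fun j : Fin k => h5 (j + 1) (by omega) (by omega)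
  have hinj : Function.Injective f := by
    intro a b hab
    have := (hf a).symm.trans (hab ▸ hf b)
    exact Fin.ext (by omega)
  simpa using Fintype.card_le_of_injective f hinj

theorem grundy_partial_coloring_le {V : Type*} [Fintype V] (G : SimpleGraph V)
    (k : ℕ) (S : Set V) (h : GrundyColorable (G.induce S) k) :
    k ≤ grundy G := by
  obtain ⟨c, hA⟩ := gaux_of_induce G S k h
  obtain ⟨k', hk, hG⟩ := gaux_univ G Sᶜ.ncard S c k rfl hA
  exact le_trans hk (le_csSup (grundy_bdd G) hG)
end

section
/- Let G be a graph and v a vertex whose neighborhood N(v) can be partitioned into at most ℓ−1 independent modules of G. Then in every Grundy coloring of G, the color of v is at most ℓ. -/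
variable {V : Type*}

theorem one_ell_twin_color_le {V : Type*} (G : SimpleGraph V) (ℓ : ℕ) (v : V)
    (hpart : ∃ n, n < ℓ ∧ NbhdPartition G v n)
    (c : V → ℕ) (hc : IsGrundyColoring G c) :
    c v ≤ ℓ := by
  by_contra hle
  push_neg at hle
  obtain ⟨n, hn, M, hmod, hdisj, hcover⟩ := hpart
  obtain ⟨hpos, hproper, hgrundy⟩ := hc
  -- for each j : Fin ℓ, get a neighbor with color j+1
  have hu : ∀ j : Fin ℓ, ∃ u, G.Adj v u ∧ c u = j.1 + 1 := by
    intro j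
    exact hgrundy v (j.1 + 1) (Nat.succ_le_succ (Nat.zero_le _))
      (lt_of_le_of_lt (Nat.succ_le_of_lt j.2) hle)
  choose u hadj hcol using hu
  have hidx : ∀ j : Fin ℓ, ∃ i : Fin n, u j ∈ M i := by
    intro j
    have : u j ∈ G.neighborSet v := hadj j
    rw [← hcover] at this
    exact Set.mem_iUnion.mp this
  choose idx hmem using hidx
  have hninj : ¬ Function.Injective idx := by
    intro hinj
    have := Fintype.card_le_of_injective idx hinj
    simp at this
    omega
  rw [Function.not_injective_iff] at hninj
  obtain ⟨a, b, hab, hne⟩ := hninj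
  -- wlog a < b
  wlog hlt : a.1 < b.1 generalizing a b
  · exact this b a hab.symm hne.symm
      (by have := Fin.val_ne_of_ne hne; omega)
  · have hmodi := hmod (idx a)
    have hua : u a ∈ M (idx a) := hmem a
    have hub : u b ∈ M (idx a) := hab ▸ hmem b
    -- u b has color b+1 > a+1, so has a neighbor w of color a+1
    obtain ⟨w, hwadj, hwc⟩ := hgrundy (u b) (a.1 + 1)
      (Nat.succ_le_succ (Nat.zero_le _)) (by rw [hcol b]; omega)
    have : G.Adj (u a) w := (hmodi.2 (u a) hua (u b) hub w).mpr hwadj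
    exact hproper (u a) w this (by rw [hcol a, hwc])
end

section
/- Every cubic (3-regular) graph without an induced 4-cycle has Grundy number 4. -/
variable {V : Type*}

set_option maxHeartbeats 1000000
set_option linter.unusedSectionVars false
set_option linter.unreachableTactic false
set_option linter.unusedTactic false

section Mex

/-- least positive integer not in `s` -/
noncomputable def mex1 (s : Finset ℕ) : ℕ := sInf {n | 0 < n ∧ n ∉ s}

lemma mex1_spec (s : Finset ℕ) : 0 < mex1 s ∧ mex1 s ∉ s := by
  have hne : {n | 0 < n ∧ n ∉ s}.Nonempty := by
    refine ⟨s.sup id + 1, Nat.succ_pos _, fun hmem => ?_⟩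
    have h2 := Finset.le_sup (f := id) hmem
    simp only [id_eq] at h2
    omega
  exact Nat.sInf_mem hne

lemma mex1_min (s : Finset ℕ) {j : ℕ} (hj : 0 < j) (hlt : j < mex1 s) : j ∈ s := by
  have := Nat.notMem_of_lt_sInf (s := {n | 0 < n ∧ n ∉ s}) hlt
  simp only [Set.mem_setOf_eq, not_and, not_not] at this
  exact this hj

lemma mex1_le_card (s : Finset ℕ) : mex1 s ≤ s.card + 1 := by
  by_contra h
  push_neg at h
  have hsub : Finset.Icc 1 (s.card + 1) ⊆ s := by
    intro j hj
    simp only [Finset.mem_Icc] at hj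
    exact mex1_min s (by omega) (by omega)
  have := Finset.card_le_card hsub
  simp [Nat.card_Icc] at this

end Mex

section Machinery

variable [Fintype V] (G : SimpleGraph V) [DecidableRel G.Adj]

/-- A good partial coloring: 0 means uncolored. -/
def GoodPartial (p : V → ℕ) : Prop :=
  (∀ x y, G.Adj x y → p x ≠ 0 → p y ≠ 0 → p x ≠ p y) ∧
  (∀ x, p x ≤ 4) ∧
  (∀ x j, 0 < j → j < p x → ∃ u, G.Adj x u ∧ p u = j)

lemma goodPartial_extend (hdeg : ∀ x, G.degree x ≤ 3) :
    ∀ (n : ℕ) (p : V → ℕ), GoodPartial G p →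
      (Finset.univ.filter (fun x => p x = 0)).card ≤ n →
      ∃ c : V → ℕ, GoodPartial G c ∧ (∀ x, c x ≠ 0) ∧ ∀ x, p x ≠ 0 → c x = p x := by
  classical
  intro n
  induction n with
  | zero =>
    intro p hp hcard
    refine ⟨p, hp, fun x => ?_, fun x h => rfl⟩
    intro hx
    have : x ∈ Finset.univ.filter (fun x => p x = 0) := by simp [hx]
    have := Finset.card_pos.mpr ⟨x, this⟩
    omega
  | succ n ih =>
    intro p hp hcard
    by_cases hall : ∀ x, p x ≠ 0
    · exact ⟨p, hp, hall, fun x h => rfl⟩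
    · push_neg at hall
      obtain ⟨x0, hx0⟩ := hall
      set s : Finset ℕ := (G.neighborFinset x0).image p with hs
      set m : ℕ := mex1 s with hm
      have hmpos : 0 < m := (mex1_spec s).1
      have hmnot : m ∉ s := (mex1_spec s).2
      have hm4 : m ≤ 4 := by
        have h1 : s.card ≤ 3 := by
          calc s.card ≤ (G.neighborFinset x0).card := Finset.card_image_le
          _ ≤ 3 := hdeg x0
        have := mex1_le_card s
        omega
      set p' : V → ℕ := Function.update p x0 m with hp'
      have hp'x0 : p' x0 = m := by simp [hp']
      have hp'ne : ∀ x, x ≠ x0 → p' x = p x := by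
        intro x hx; simp [hp', Function.update_of_ne hx]
      have hnbr : ∀ u, G.Adj x0 u → p u ≠ m := by
        intro u hu heq
        exact hmnot (Finset.mem_image.mpr ⟨u, by simp [hu], heq⟩)
      have hgood' : GoodPartial G p' := by
        refine ⟨?_, ?_, ?_⟩
        · intro x y hadj hx hy
          by_cases hx0x : x = x0
          · subst hx0x
            have hyne : y ≠ x := fun h => by subst h; exact G.loopless.irrefl _ hadj
            rw [hp'x0, hp'ne y hyne]
            intro h
            exact hnbr y hadj h.symm
          · by_cases hy0 : y = x0
            · subst hy0
              rw [hp'x0, hp'ne x hx0x]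
              intro h
              exact hnbr x hadj.symm h
            · rw [hp'ne x hx0x, hp'ne y hy0] at *
              exact hp.1 x y hadj hx hy
        · intro x
          by_cases hx : x = x0
          · subst hx; rw [hp'x0]; exact hm4
          · rw [hp'ne x hx]; exact hp.2.1 x
        · intro x j hj hjx
          by_cases hx : x = x0
          · subst hx
            rw [hp'x0] at hjx
            have hjs : j ∈ s := mex1_min s hj hjx
            obtain ⟨u, hu, hju⟩ := Finset.mem_image.mp hjs
            rw [SimpleGraph.mem_neighborFinset] at hu
            refine ⟨u, hu, ?_⟩
            rw [hp'ne u (fun h => G.loopless.irrefl _ (h ▸ hu))]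
            exact hju
          · rw [hp'ne x hx] at hjx
            obtain ⟨u, hu, hju⟩ := hp.2.2 x j hj hjx
            refine ⟨u, hu, ?_⟩
            have hune : u ≠ x0 := by
              intro h; rw [h, hx0] at hju; omega
            rw [hp'ne u hune]; exact hju
      have hsub : Finset.univ.filter (fun x => p' x = 0) ⊆
          (Finset.univ.filter (fun x => p x = 0)).erase x0 := by
        intro x hx
        simp only [Finset.mem_filter, Finset.mem_univ, true_and] at hx
        have hxne : x ≠ x0 := by
          intro h; subst h; rw [hp'x0] at hx; omega
        rw [hp'ne x hxne] at hx
        exact Finset.mem_erase.mpr ⟨hxne, by simp [hx]⟩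
      have hcard' : (Finset.univ.filter (fun x => p' x = 0)).card ≤ n := by
        have h1 := Finset.card_le_card hsub
        have h2 : ((Finset.univ.filter (fun x => p x = 0)).erase x0).card =
            (Finset.univ.filter (fun x => p x = 0)).card - 1 :=
          Finset.card_erase_of_mem (by simp [hx0])
        have h3 : 0 < (Finset.univ.filter (fun x => p x = 0)).card :=
          Finset.card_pos.mpr ⟨x0, by simp [hx0]⟩
        omega
      obtain ⟨c, hc, hctot, hcagree⟩ := ih p' hgood' hcard'
      refine ⟨c, hc, hctot, fun x hx => ?_⟩
      have hxne : x ≠ x0 := fun h => hx (h ▸ hx0)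
      rw [hcagree x (by rw [hp'ne x hxne]; exact hx), hp'ne x hxne]

end Machinery

section Part2

variable [Fintype V] (G : SimpleGraph V) [DecidableRel G.Adj]

omit [Fintype V] [DecidableRel G.Adj] in
lemma noC4 (hC4 : ¬ HasInducedC4 G) {a b c d : V} (hac : a ≠ c) (hbd : b ≠ d)
    (h1 : G.Adj a b) (h2 : G.Adj b c) (h3 : G.Adj c d) (h4 : G.Adj d a)
    (n1 : ¬G.Adj a c) (n2 : ¬G.Adj b d) : False :=
  hC4 ⟨a, b, c, d, h1.ne, hac, h4.ne', h2.ne, hbd, h3.ne, h1, h2, h3, h4, n1, n2⟩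

omit [Fintype V] [DecidableRel G.Adj] in
/-- two nonadjacent vertices `a b` cannot have common neighbors `v, w` with
`v, w` nonadjacent. -/
lemma no_common (hC4 : ¬ HasInducedC4 G) {a b v w : V}
    (hab' : a ≠ b) (hab : ¬G.Adj a b)
    (hva : G.Adj v a) (hvb : G.Adj v b) (hwa : G.Adj w a) (hwb : G.Adj w b)
    (hvw' : v ≠ w) (hvw : ¬G.Adj v w) : False :=
  noC4 G hC4 hab' hvw' hva.symm hvb hwb.symm hwa hab hvw

lemma deg3_closure {x : V} (h : G.degree x = 3) {p q r : V}
    (hp : G.Adj x p) (hq : G.Adj x q) (hr : G.Adj x r)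
    (hpq : p ≠ q) (hpr : p ≠ r) (hqr : q ≠ r) :
    ∀ s, G.Adj x s → s = p ∨ s = q ∨ s = r := by
  classical
  intro s hs
  have hsub : ({p, q, r} : Finset V) ⊆ G.neighborFinset x := by
    intro u hu
    simp only [Finset.mem_insert, Finset.mem_singleton] at hu
    rcases hu with rfl | rfl | rfl <;> simp [hp, hq, hr]
  have hcard : ({p, q, r} : Finset V).card = 3 := by
    rw [Finset.card_insert_of_notMem (by simp [hpq, hpr]),
      Finset.card_insert_of_notMem (by simp [hqr]), Finset.card_singleton]
  have heq : ({p, q, r} : Finset V) = G.neighborFinset x :=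
    Finset.eq_of_subset_of_card_le hsub (by rw [hcard]; exact le_of_eq h)
  have : s ∈ ({p, q, r} : Finset V) := by
    rw [heq]; simpa using hs
  simpa using this

lemma deg3_third {x p : V} (h : G.degree x = 3) (hp : G.Adj x p) :
    ∃ q r : V, G.Adj x q ∧ G.Adj x r ∧ p ≠ q ∧ p ≠ r ∧ q ≠ r ∧
      (∀ s, G.Adj x s → s = p ∨ s = q ∨ s = r) := by
  classical
  have hpmem : p ∈ G.neighborFinset x := by simpa using hp
  have hcard : ((G.neighborFinset x).erase p).card = 2 := by
    rw [Finset.card_erase_of_mem hpmem, SimpleGraph.card_neighborFinset_eq_degree, h]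
  obtain ⟨q, hq, r, hr, hqr⟩ := Finset.one_lt_card.mp (by omega :
    1 < ((G.neighborFinset x).erase p).card)
  have hq' : G.Adj x q := by
    have := Finset.mem_of_mem_erase hq; simpa using this
  have hr' : G.Adj x r := by
    have := Finset.mem_of_mem_erase hr; simpa using this
  have hpq : p ≠ q := fun h => (Finset.ne_of_mem_erase hq) h.symm
  have hpr : p ≠ r := fun h => (Finset.ne_of_mem_erase hr) h.symm
  exact ⟨q, r, hq', hr', hpq, hpr, hqr, deg3_closure G h hp hq' hr' hpq hpr hqr⟩

lemma deg3_pair {x p q : V} (h : G.degree x = 3) (hp : G.Adj x p) (hq : G.Adj x q)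
    (hpq : p ≠ q) :
    ∃ r : V, G.Adj x r ∧ p ≠ r ∧ q ≠ r ∧
      (∀ s, G.Adj x s → s = p ∨ s = q ∨ s = r) := by
  obtain ⟨q', r', hq', hr', hpq', hpr', hq'r', hcl⟩ := deg3_third G h hp
  rcases hcl q hq with rfl | rfl | rfl
  · exact absurd rfl hpq
  · exact ⟨r', hr', hpr', hq'r', fun s hs => by
      rcases hcl s hs with h | h | h
      · exact Or.inl h
      · exact Or.inr (Or.inl h)
      · exact Or.inr (Or.inr h)⟩
  · refine ⟨q', hq', hpq', fun h => hq'r' h.symm, fun s hs => by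
      rcases hcl s hs with h | h | h
      · exact Or.inl h
      · exact Or.inr (Or.inr h)
      · exact Or.inr (Or.inl h)⟩

end Part2

section ListCol
variable [DecidableEq V]

def listCol : List (V × ℕ) → V → ℕ
  | [], _ => 0
  | q :: t, u => if u = q.1 then q.2 else listCol t u

@[simp] lemma listCol_nil (u : V) : listCol [] u = 0 := rfl

@[simp] lemma listCol_cons (q : V × ℕ) (t : List (V × ℕ)) (u : V) :
    listCol (q :: t) u = if u = q.1 then q.2 else listCol t u := rfl

lemma listCol_mem (L : List (V × ℕ)) (u : V) (h : listCol L u ≠ 0) :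
    (u, listCol L u) ∈ L := by
  induction L with
  | nil => simp at h
  | cons q t ih =>
    by_cases hu : u = q.1
    · subst hu
      rw [listCol_cons, if_pos rfl]
      exact List.mem_cons_self
    · rw [listCol_cons, if_neg hu] at h ⊢
      exact List.mem_cons_of_mem _ (ih h)

end ListCol

section GoodList
variable [Fintype V] [DecidableEq V] (G : SimpleGraph V) [DecidableRel G.Adj]

lemma goodPartial_of_list (L : List (V × ℕ))
    (hpos : ∀ q ∈ L, q.2 ≤ 4)
    (hprop : ∀ q ∈ L, ∀ r ∈ L, q.2 = r.2 → G.Adj q.1 r.1 → False)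
    (hdom : ∀ q ∈ L, ∀ j : ℕ, 0 < j → j < q.2 →
      ∃ r, r ∈ L ∧ G.Adj q.1 r.1 ∧ listCol L r.1 = j) :
    GoodPartial G (listCol L) := by
  refine ⟨?_, ?_, ?_⟩
  · intro x y hadj hx hy heq
    exact hprop (x, listCol L x) (listCol_mem L x hx)
      (y, listCol L y) (listCol_mem L y hy) heq hadj
  · intro x
    by_cases hx : listCol L x = 0
    · omega
    · exact hpos _ (listCol_mem L x hx)
  · intro x j hj hjx
    have hx : listCol L x ≠ 0 := by omega
    obtain ⟨r, hr, hadj, hcol⟩ := hdom (x, listCol L x) (listCol_mem L x hx) j hj hjx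
    exact ⟨r.1, hadj, hcol⟩

end GoodList

section Leaves
variable [Fintype V] (G : SimpleGraph V) [DecidableRel G.Adj]

lemma leafT3 {v a b c : V} (hva : G.Adj v a) (hvb : G.Adj v b) (hvc : G.Adj v c)
    (hab : G.Adj a b) (hac : G.Adj a c) (hbc : G.Adj b c)
    : ∃ p : V → ℕ, GoodPartial G p ∧ ∃ t, p t = 4 := by
  classical
  refine ⟨listCol [(v, 4), (a, 1), (b, 2), (c, 3)], goodPartial_of_list G _ ?_ ?_ ?_, v, by simp⟩
  · intro q hq
    simp only [List.mem_cons, List.not_mem_nil, or_false] at hq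
    rcases hq with rfl|rfl|rfl|rfl <;> simp
  · rintro ⟨xx, kk⟩ hq ⟨yy, ll⟩ hr heq hadj
    simp only [List.mem_cons, List.not_mem_nil, or_false, Prod.mk.injEq] at hq hr
    rcases hq with ⟨rfl, rfl⟩|⟨rfl, rfl⟩|⟨rfl, rfl⟩|⟨rfl, rfl⟩ <;> rcases hr with ⟨rfl, rfl⟩|⟨rfl, rfl⟩|⟨rfl, rfl⟩|⟨rfl, rfl⟩ <;>
      first
        | omega
        | exact G.loopless.irrefl _ hadj
        | exact absurd hadj (by assumption)
        | exact absurd hadj.symm (by assumption)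
  · rintro ⟨xx, kk⟩ hq j hj hjk
    simp only [List.mem_cons, List.not_mem_nil, or_false, Prod.mk.injEq] at hq
    rcases hq with ⟨rfl, rfl⟩|⟨rfl, rfl⟩|⟨rfl, rfl⟩|⟨rfl, rfl⟩
    · interval_cases j
      · exact ⟨(a, 1), by simp, hva, by simp [listCol, hva.ne']⟩
      · exact ⟨(b, 2), by simp, hvb, by simp [listCol, hvb.ne', hab.ne']⟩
      · exact ⟨(c, 3), by simp, hvc, by simp [listCol, hvc.ne', hac.ne', hbc.ne']⟩
    · omega
    · interval_cases j
      · exact ⟨(a, 1), by simp, hab.symm, by simp [listCol, hva.ne']⟩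
    · interval_cases j
      · exact ⟨(a, 1), by simp, hac.symm, by simp [listCol, hva.ne']⟩
      · exact ⟨(b, 2), by simp, hbc.symm, by simp [listCol, hvb.ne', hab.ne']⟩

lemma leafT2a {v a b c x : V} (hva : G.Adj v a) (hvb : G.Adj v b) (hvc : G.Adj v c)
    (hab : G.Adj a b) (hac : G.Adj a c) (hax : G.Adj a x) (hcx : G.Adj c x)
    (nbc : ¬G.Adj b c) (nbx : ¬G.Adj b x)
    (dxv : x ≠ v) (dxb : x ≠ b) (dcb : c ≠ b)
    : ∃ p : V → ℕ, GoodPartial G p ∧ ∃ t, p t = 4 := by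
  classical
  refine ⟨listCol [(v, 4), (a, 1), (b, 2), (x, 2), (c, 3)], goodPartial_of_list G _ ?_ ?_ ?_, v, by simp⟩
  · intro q hq
    simp only [List.mem_cons, List.not_mem_nil, or_false] at hq
    rcases hq with rfl|rfl|rfl|rfl|rfl <;> simp
  · rintro ⟨xx, kk⟩ hq ⟨yy, ll⟩ hr heq hadj
    simp only [List.mem_cons, List.not_mem_nil, or_false, Prod.mk.injEq] at hq hr
    rcases hq with ⟨rfl, rfl⟩|⟨rfl, rfl⟩|⟨rfl, rfl⟩|⟨rfl, rfl⟩|⟨rfl, rfl⟩ <;> rcases hr with ⟨rfl, rfl⟩|⟨rfl, rfl⟩|⟨rfl, rfl⟩|⟨rfl, rfl⟩|⟨rfl, rfl⟩ <;>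
      first
        | omega
        | exact G.loopless.irrefl _ hadj
        | exact absurd hadj (by assumption)
        | exact absurd hadj.symm (by assumption)
  · rintro ⟨xx, kk⟩ hq j hj hjk
    simp only [List.mem_cons, List.not_mem_nil, or_false, Prod.mk.injEq] at hq
    rcases hq with ⟨rfl, rfl⟩|⟨rfl, rfl⟩|⟨rfl, rfl⟩|⟨rfl, rfl⟩|⟨rfl, rfl⟩
    · interval_cases j
      · exact ⟨(a, 1), by simp, hva, by simp [listCol, hva.ne']⟩
      · exact ⟨(b, 2), by simp, hvb, by simp [listCol, hvb.ne', hab.ne']⟩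
      · exact ⟨(c, 3), by simp, hvc, by simp [listCol, hvc.ne', hac.ne', dcb, hcx.ne]⟩
    · omega
    · interval_cases j
      · exact ⟨(a, 1), by simp, hab.symm, by simp [listCol, hva.ne']⟩
    · interval_cases j
      · exact ⟨(a, 1), by simp, hax.symm, by simp [listCol, hva.ne']⟩
    · interval_cases j
      · exact ⟨(a, 1), by simp, hac.symm, by simp [listCol, hva.ne']⟩
      · exact ⟨(x, 2), by simp, hcx, by simp [listCol, dxv, hax.ne', dxb]⟩

lemma leafT2b {v a b c x x1 : V} (hva : G.Adj v a) (hvb : G.Adj v b) (hvc : G.Adj v c)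
    (hab : G.Adj a b) (hac : G.Adj a c) (hcx : G.Adj c x) (hxx1 : G.Adj x x1)
    (nbc : ¬G.Adj b c) (nbx : ¬G.Adj b x) (nax1 : ¬G.Adj a x1) (nax : ¬G.Adj a x)
    (dxv : x ≠ v) (dxa : x ≠ a) (dxb : x ≠ b) (dcb : c ≠ b)
    (dx1v : x1 ≠ v) (dx1a : x1 ≠ a) (dx1b : x1 ≠ b) (dx1c : x1 ≠ c)
    : ∃ p : V → ℕ, GoodPartial G p ∧ ∃ t, p t = 4 := by
  classical
  refine ⟨listCol [(v, 4), (a, 1), (b, 2), (c, 3), (x, 2), (x1, 1)], goodPartial_of_list G _ ?_ ?_ ?_, v, by simp⟩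
  · intro q hq
    simp only [List.mem_cons, List.not_mem_nil, or_false] at hq
    rcases hq with rfl|rfl|rfl|rfl|rfl|rfl <;> simp
  · rintro ⟨xx, kk⟩ hq ⟨yy, ll⟩ hr heq hadj
    simp only [List.mem_cons, List.not_mem_nil, or_false, Prod.mk.injEq] at hq hr
    rcases hq with ⟨rfl, rfl⟩|⟨rfl, rfl⟩|⟨rfl, rfl⟩|⟨rfl, rfl⟩|⟨rfl, rfl⟩|⟨rfl, rfl⟩ <;> rcases hr with ⟨rfl, rfl⟩|⟨rfl, rfl⟩|⟨rfl, rfl⟩|⟨rfl, rfl⟩|⟨rfl, rfl⟩|⟨rfl, rfl⟩ <;>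
      first
        | omega
        | exact G.loopless.irrefl _ hadj
        | exact absurd hadj (by assumption)
        | exact absurd hadj.symm (by assumption)
  · rintro ⟨xx, kk⟩ hq j hj hjk
    simp only [List.mem_cons, List.not_mem_nil, or_false, Prod.mk.injEq] at hq
    rcases hq with ⟨rfl, rfl⟩|⟨rfl, rfl⟩|⟨rfl, rfl⟩|⟨rfl, rfl⟩|⟨rfl, rfl⟩|⟨rfl, rfl⟩
    · interval_cases j
      · exact ⟨(a, 1), by simp, hva, by simp [listCol, hva.ne']⟩
      · exact ⟨(b, 2), by simp, hvb, by simp [listCol, hvb.ne', hab.ne']⟩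
      · exact ⟨(c, 3), by simp, hvc, by simp [listCol, hvc.ne', hac.ne', dcb]⟩
    · omega
    · interval_cases j
      · exact ⟨(a, 1), by simp, hab.symm, by simp [listCol, hva.ne']⟩
    · interval_cases j
      · exact ⟨(a, 1), by simp, hac.symm, by simp [listCol, hva.ne']⟩
      · exact ⟨(x, 2), by simp, hcx, by simp [listCol, dxv, dxa, dxb, hcx.ne']⟩
    · interval_cases j
      · exact ⟨(x1, 1), by simp, hxx1, by simp [listCol, dx1v, dx1a, dx1b, dx1c, hxx1.ne']⟩
    · omega

lemma leafT1a {v a b c x xp : V} (hva : G.Adj v a) (hvb : G.Adj v b) (hvc : G.Adj v c)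
    (hab : G.Adj a b) (hcx : G.Adj c x) (hcxp : G.Adj c xp) (hxxp : G.Adj x xp)
    (nax : ¬G.Adj a x) (nbxp : ¬G.Adj b xp) (nbc : ¬G.Adj b c) (nac : ¬G.Adj a c)
    (dxv : x ≠ v) (dxa : x ≠ a) (dxb : x ≠ b) (dcb : c ≠ b) (dca : c ≠ a)
    (dxpv : xp ≠ v) (dxpa : xp ≠ a) (dxpb : xp ≠ b)
    : ∃ p : V → ℕ, GoodPartial G p ∧ ∃ t, p t = 4 := by
  classical
  refine ⟨listCol [(v, 4), (a, 1), (b, 2), (c, 3), (x, 1), (xp, 2)], goodPartial_of_list G _ ?_ ?_ ?_, v, by simp⟩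
  · intro q hq
    simp only [List.mem_cons, List.not_mem_nil, or_false] at hq
    rcases hq with rfl|rfl|rfl|rfl|rfl|rfl <;> simp
  · rintro ⟨xx, kk⟩ hq ⟨yy, ll⟩ hr heq hadj
    simp only [List.mem_cons, List.not_mem_nil, or_false, Prod.mk.injEq] at hq hr
    rcases hq with ⟨rfl, rfl⟩|⟨rfl, rfl⟩|⟨rfl, rfl⟩|⟨rfl, rfl⟩|⟨rfl, rfl⟩|⟨rfl, rfl⟩ <;> rcases hr with ⟨rfl, rfl⟩|⟨rfl, rfl⟩|⟨rfl, rfl⟩|⟨rfl, rfl⟩|⟨rfl, rfl⟩|⟨rfl, rfl⟩ <;>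
      first
        | omega
        | exact G.loopless.irrefl _ hadj
        | exact absurd hadj (by assumption)
        | exact absurd hadj.symm (by assumption)
  · rintro ⟨xx, kk⟩ hq j hj hjk
    simp only [List.mem_cons, List.not_mem_nil, or_false, Prod.mk.injEq] at hq
    rcases hq with ⟨rfl, rfl⟩|⟨rfl, rfl⟩|⟨rfl, rfl⟩|⟨rfl, rfl⟩|⟨rfl, rfl⟩|⟨rfl, rfl⟩
    · interval_cases j
      · exact ⟨(a, 1), by simp, hva, by simp [listCol, hva.ne']⟩
      · exact ⟨(b, 2), by simp, hvb, by simp [listCol, hvb.ne', hab.ne']⟩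
      · exact ⟨(c, 3), by simp, hvc, by simp [listCol, hvc.ne', dca, dcb]⟩
    · omega
    · interval_cases j
      · exact ⟨(a, 1), by simp, hab.symm, by simp [listCol, hva.ne']⟩
    · interval_cases j
      · exact ⟨(x, 1), by simp, hcx, by simp [listCol, dxv, dxa, dxb, hcx.ne']⟩
      · exact ⟨(xp, 2), by simp, hcxp, by simp [listCol, dxpv, dxpa, dxpb, hcxp.ne', hxxp.ne']⟩
    · omega
    · interval_cases j
      · exact ⟨(x, 1), by simp, hxxp.symm, by simp [listCol, dxv, dxa, dxb, hcx.ne']⟩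

lemma leafL0pair {v a b c bb c1 c2 : V} (hva : G.Adj v a) (hvb : G.Adj v b) (hvc : G.Adj v c)
    (hbb : G.Adj b bb) (hcc1 : G.Adj c c1) (hcc2 : G.Adj c c2) (hc12 : G.Adj c1 c2)
    (nab : ¬G.Adj a b) (nac : ¬G.Adj a c) (nbc : ¬G.Adj b c)
    (nabb : ¬G.Adj a bb) (nac1 : ¬G.Adj a c1) (nbbc1 : ¬G.Adj bb c1) (nbc2 : ¬G.Adj b c2)
    (dab : a ≠ b) (dac : a ≠ c) (dbc : b ≠ c)
    (dbbv : bb ≠ v) (dbba : bb ≠ a) (dbbc : bb ≠ c)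
    (dc1v : c1 ≠ v) (dc1a : c1 ≠ a) (dc1b : c1 ≠ b) (dc1bb : c1 ≠ bb)
    (dc2v : c2 ≠ v) (dc2a : c2 ≠ a) (dc2b : c2 ≠ b) (dc2bb : c2 ≠ bb)
    : ∃ p : V → ℕ, GoodPartial G p ∧ ∃ t, p t = 4 := by
  classical
  refine ⟨listCol [(v, 4), (a, 1), (b, 2), (c, 3), (bb, 1), (c1, 1), (c2, 2)], goodPartial_of_list G _ ?_ ?_ ?_, v, by simp⟩
  · intro q hq
    simp only [List.mem_cons, List.not_mem_nil, or_false] at hq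
    rcases hq with rfl|rfl|rfl|rfl|rfl|rfl|rfl <;> simp
  · rintro ⟨xx, kk⟩ hq ⟨yy, ll⟩ hr heq hadj
    simp only [List.mem_cons, List.not_mem_nil, or_false, Prod.mk.injEq] at hq hr
    rcases hq with ⟨rfl, rfl⟩|⟨rfl, rfl⟩|⟨rfl, rfl⟩|⟨rfl, rfl⟩|⟨rfl, rfl⟩|⟨rfl, rfl⟩|⟨rfl, rfl⟩ <;> rcases hr with ⟨rfl, rfl⟩|⟨rfl, rfl⟩|⟨rfl, rfl⟩|⟨rfl, rfl⟩|⟨rfl, rfl⟩|⟨rfl, rfl⟩|⟨rfl, rfl⟩ <;>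
      first
        | omega
        | exact G.loopless.irrefl _ hadj
        | exact absurd hadj (by assumption)
        | exact absurd hadj.symm (by assumption)
  · rintro ⟨xx, kk⟩ hq j hj hjk
    simp only [List.mem_cons, List.not_mem_nil, or_false, Prod.mk.injEq] at hq
    rcases hq with ⟨rfl, rfl⟩|⟨rfl, rfl⟩|⟨rfl, rfl⟩|⟨rfl, rfl⟩|⟨rfl, rfl⟩|⟨rfl, rfl⟩|⟨rfl, rfl⟩
    · interval_cases j
      · exact ⟨(a, 1), by simp, hva, by simp [listCol, hva.ne']⟩
      · exact ⟨(b, 2), by simp, hvb, by simp [listCol, hvb.ne', dab.symm]⟩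
      · exact ⟨(c, 3), by simp, hvc, by simp [listCol, hvc.ne', dac.symm, dbc.symm]⟩
    · omega
    · interval_cases j
      · exact ⟨(bb, 1), by simp, hbb, by simp [listCol, dbbv, dbba, hbb.ne', dbbc]⟩
    · interval_cases j
      · exact ⟨(c1, 1), by simp, hcc1, by simp [listCol, dc1v, dc1a, dc1b, hcc1.ne', dc1bb]⟩
      · exact ⟨(c2, 2), by simp, hcc2, by simp [listCol, dc2v, dc2a, dc2b, hcc2.ne', dc2bb, hc12.ne']⟩
    · omega
    · omega
    · interval_cases j
      · exact ⟨(c1, 1), by simp, hc12.symm, by simp [listCol, dc1v, dc1a, dc1b, hcc1.ne', dc1bb]⟩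

lemma leafN1 {v a b c w c1 c2 : V} (hva : G.Adj v a) (hvb : G.Adj v b) (hvc : G.Adj v c)
    (haw : G.Adj a w) (hc2w : G.Adj c2 w) (hcc1 : G.Adj c c1) (hcc2 : G.Adj c c2)
    (nab : ¬G.Adj a b) (nac : ¬G.Adj a c) (nbc : ¬G.Adj b c)
    (nbw : ¬G.Adj b w) (nbc1 : ¬G.Adj b c1) (nc1w : ¬G.Adj c1 w) (nac2 : ¬G.Adj a c2)
    (nac1 : ¬G.Adj a c1) (ncw : ¬G.Adj c w) (nc1c2 : ¬G.Adj c1 c2)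
    (dab : a ≠ b) (dac : a ≠ c) (dbc : b ≠ c)
    (dwv : w ≠ v) (dwb : w ≠ b) (dwc : w ≠ c)
    (dc1v : c1 ≠ v) (dc1a : c1 ≠ a) (dc1b : c1 ≠ b) (dc1w : c1 ≠ w)
    (dc2v : c2 ≠ v) (dc2a : c2 ≠ a) (dc2b : c2 ≠ b) (dc1c2 : c1 ≠ c2)
    : ∃ p : V → ℕ, GoodPartial G p ∧ ∃ t, p t = 4 := by
  classical
  refine ⟨listCol [(v, 4), (a, 2), (b, 1), (c, 3), (w, 1), (c1, 1), (c2, 2)], goodPartial_of_list G _ ?_ ?_ ?_, v, by simp⟩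
  · intro q hq
    simp only [List.mem_cons, List.not_mem_nil, or_false] at hq
    rcases hq with rfl|rfl|rfl|rfl|rfl|rfl|rfl <;> simp
  · rintro ⟨xx, kk⟩ hq ⟨yy, ll⟩ hr heq hadj
    simp only [List.mem_cons, List.not_mem_nil, or_false, Prod.mk.injEq] at hq hr
    rcases hq with ⟨rfl, rfl⟩|⟨rfl, rfl⟩|⟨rfl, rfl⟩|⟨rfl, rfl⟩|⟨rfl, rfl⟩|⟨rfl, rfl⟩|⟨rfl, rfl⟩ <;> rcases hr with ⟨rfl, rfl⟩|⟨rfl, rfl⟩|⟨rfl, rfl⟩|⟨rfl, rfl⟩|⟨rfl, rfl⟩|⟨rfl, rfl⟩|⟨rfl, rfl⟩ <;>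
      first
        | omega
        | exact G.loopless.irrefl _ hadj
        | exact absurd hadj (by assumption)
        | exact absurd hadj.symm (by assumption)
  · rintro ⟨xx, kk⟩ hq j hj hjk
    simp only [List.mem_cons, List.not_mem_nil, or_false, Prod.mk.injEq] at hq
    rcases hq with ⟨rfl, rfl⟩|⟨rfl, rfl⟩|⟨rfl, rfl⟩|⟨rfl, rfl⟩|⟨rfl, rfl⟩|⟨rfl, rfl⟩|⟨rfl, rfl⟩
    · interval_cases j
      · exact ⟨(b, 1), by simp, hvb, by simp [listCol, hvb.ne', dab.symm]⟩
      · exact ⟨(a, 2), by simp, hva, by simp [listCol, hva.ne']⟩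
      · exact ⟨(c, 3), by simp, hvc, by simp [listCol, hvc.ne', dac.symm, dbc.symm]⟩
    · interval_cases j
      · exact ⟨(w, 1), by simp, haw, by simp [listCol, dwv, haw.ne', dwb, dwc]⟩
    · omega
    · interval_cases j
      · exact ⟨(c1, 1), by simp, hcc1, by simp [listCol, dc1v, dc1a, dc1b, hcc1.ne', dc1w]⟩
      · exact ⟨(c2, 2), by simp, hcc2, by simp [listCol, dc2v, dc2a, dc2b, hcc2.ne', hc2w.ne, dc1c2.symm]⟩
    · omega
    · omega
    · interval_cases j
      · exact ⟨(w, 1), by simp, hc2w, by simp [listCol, dwv, haw.ne', dwb, dwc]⟩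

lemma leafN2 {v a b c w c1 c2 : V} (hva : G.Adj v a) (hvb : G.Adj v b) (hvc : G.Adj v c)
    (hbw : G.Adj b w) (hc2w : G.Adj c2 w) (hcc1 : G.Adj c c1) (hcc2 : G.Adj c c2)
    (nab : ¬G.Adj a b) (nac : ¬G.Adj a c) (nbc : ¬G.Adj b c)
    (naw : ¬G.Adj a w) (nac1 : ¬G.Adj a c1) (nc1w : ¬G.Adj c1 w) (nbc2 : ¬G.Adj b c2)
    (nbc1 : ¬G.Adj b c1) (ncw : ¬G.Adj c w) (nc1c2 : ¬G.Adj c1 c2)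
    (dab : a ≠ b) (dac : a ≠ c) (dbc : b ≠ c)
    (dwv : w ≠ v) (dwa : w ≠ a) (dwc : w ≠ c)
    (dc1v : c1 ≠ v) (dc1a : c1 ≠ a) (dc1b : c1 ≠ b) (dc1w : c1 ≠ w)
    (dc2v : c2 ≠ v) (dc2a : c2 ≠ a) (dc2b : c2 ≠ b) (dc1c2 : c1 ≠ c2)
    : ∃ p : V → ℕ, GoodPartial G p ∧ ∃ t, p t = 4 := by
  classical
  refine ⟨listCol [(v, 4), (a, 1), (b, 2), (c, 3), (w, 1), (c1, 1), (c2, 2)], goodPartial_of_list G _ ?_ ?_ ?_, v, by simp⟩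
  · intro q hq
    simp only [List.mem_cons, List.not_mem_nil, or_false] at hq
    rcases hq with rfl|rfl|rfl|rfl|rfl|rfl|rfl <;> simp
  · rintro ⟨xx, kk⟩ hq ⟨yy, ll⟩ hr heq hadj
    simp only [List.mem_cons, List.not_mem_nil, or_false, Prod.mk.injEq] at hq hr
    rcases hq with ⟨rfl, rfl⟩|⟨rfl, rfl⟩|⟨rfl, rfl⟩|⟨rfl, rfl⟩|⟨rfl, rfl⟩|⟨rfl, rfl⟩|⟨rfl, rfl⟩ <;> rcases hr with ⟨rfl, rfl⟩|⟨rfl, rfl⟩|⟨rfl, rfl⟩|⟨rfl, rfl⟩|⟨rfl, rfl⟩|⟨rfl, rfl⟩|⟨rfl, rfl⟩ <;>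
      first
        | omega
        | exact G.loopless.irrefl _ hadj
        | exact absurd hadj (by assumption)
        | exact absurd hadj.symm (by assumption)
  · rintro ⟨xx, kk⟩ hq j hj hjk
    simp only [List.mem_cons, List.not_mem_nil, or_false, Prod.mk.injEq] at hq
    rcases hq with ⟨rfl, rfl⟩|⟨rfl, rfl⟩|⟨rfl, rfl⟩|⟨rfl, rfl⟩|⟨rfl, rfl⟩|⟨rfl, rfl⟩|⟨rfl, rfl⟩
    · interval_cases j
      · exact ⟨(a, 1), by simp, hva, by simp [listCol, hva.ne']⟩
      · exact ⟨(b, 2), by simp, hvb, by simp [listCol, hvb.ne', dab.symm]⟩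
      · exact ⟨(c, 3), by simp, hvc, by simp [listCol, hvc.ne', dac.symm, dbc.symm]⟩
    · omega
    · interval_cases j
      · exact ⟨(w, 1), by simp, hbw, by simp [listCol, dwv, dwa, hbw.ne', dwc]⟩
    · interval_cases j
      · exact ⟨(c1, 1), by simp, hcc1, by simp [listCol, dc1v, dc1a, dc1b, hcc1.ne', dc1w]⟩
      · exact ⟨(c2, 2), by simp, hcc2, by simp [listCol, dc2v, dc2a, dc2b, hcc2.ne', hc2w.ne, dc1c2.symm]⟩
    · omega
    · omega
    · interval_cases j
      · exact ⟨(w, 1), by simp, hc2w, by simp [listCol, dwv, dwa, hbw.ne', dwc]⟩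

lemma leafN3good {v a b c hh bb c1 c2 : V} (hva : G.Adj v a) (hvb : G.Adj v b) (hvc : G.Adj v c)
    (hbb : G.Adj b bb) (hc2h : G.Adj c2 hh) (hcc1 : G.Adj c c1) (hcc2 : G.Adj c c2)
    (nab : ¬G.Adj a b) (nac : ¬G.Adj a c) (nbc : ¬G.Adj b c)
    (nah : ¬G.Adj a hh) (nabb : ¬G.Adj a bb) (nac1 : ¬G.Adj a c1)
    (nbbh : ¬G.Adj bb hh) (nc1h : ¬G.Adj c1 hh) (nbbc1 : ¬G.Adj bb c1) (nbc2 : ¬G.Adj b c2)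
    (nbh : ¬G.Adj b hh) (nch : ¬G.Adj c hh) (nvh : ¬G.Adj v hh) (nc1c2 : ¬G.Adj c1 c2)
    (dab : a ≠ b) (dac : a ≠ c) (dbc : b ≠ c)
    (dhv : hh ≠ v) (dha : hh ≠ a) (dhb : hh ≠ b) (dhc : hh ≠ c)
    (dbbv : bb ≠ v) (dbba : bb ≠ a) (dbbc : bb ≠ c) (dbbh : bb ≠ hh)
    (dc1v : c1 ≠ v) (dc1a : c1 ≠ a) (dc1b : c1 ≠ b) (dc1h : c1 ≠ hh) (dc1bb : c1 ≠ bb)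
    (dc2v : c2 ≠ v) (dc2a : c2 ≠ a) (dc2b : c2 ≠ b) (dc2bb : c2 ≠ bb) (dc1c2 : c1 ≠ c2)
    : ∃ p : V → ℕ, GoodPartial G p ∧ ∃ t, p t = 4 := by
  classical
  refine ⟨listCol [(v, 4), (a, 1), (b, 2), (c, 3), (hh, 1), (bb, 1), (c1, 1), (c2, 2)], goodPartial_of_list G _ ?_ ?_ ?_, v, by simp⟩
  · intro q hq
    simp only [List.mem_cons, List.not_mem_nil, or_false] at hq
    rcases hq with rfl|rfl|rfl|rfl|rfl|rfl|rfl|rfl <;> simp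
  · rintro ⟨xx, kk⟩ hq ⟨yy, ll⟩ hr heq hadj
    simp only [List.mem_cons, List.not_mem_nil, or_false, Prod.mk.injEq] at hq hr
    rcases hq with ⟨rfl, rfl⟩|⟨rfl, rfl⟩|⟨rfl, rfl⟩|⟨rfl, rfl⟩|⟨rfl, rfl⟩|⟨rfl, rfl⟩|⟨rfl, rfl⟩|⟨rfl, rfl⟩ <;> rcases hr with ⟨rfl, rfl⟩|⟨rfl, rfl⟩|⟨rfl, rfl⟩|⟨rfl, rfl⟩|⟨rfl, rfl⟩|⟨rfl, rfl⟩|⟨rfl, rfl⟩|⟨rfl, rfl⟩ <;>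
      first
        | omega
        | exact G.loopless.irrefl _ hadj
        | exact absurd hadj (by assumption)
        | exact absurd hadj.symm (by assumption)
  · rintro ⟨xx, kk⟩ hq j hj hjk
    simp only [List.mem_cons, List.not_mem_nil, or_false, Prod.mk.injEq] at hq
    rcases hq with ⟨rfl, rfl⟩|⟨rfl, rfl⟩|⟨rfl, rfl⟩|⟨rfl, rfl⟩|⟨rfl, rfl⟩|⟨rfl, rfl⟩|⟨rfl, rfl⟩|⟨rfl, rfl⟩
    · interval_cases j
      · exact ⟨(a, 1), by simp, hva, by simp [listCol, hva.ne']⟩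
      · exact ⟨(b, 2), by simp, hvb, by simp [listCol, hvb.ne', dab.symm]⟩
      · exact ⟨(c, 3), by simp, hvc, by simp [listCol, hvc.ne', dac.symm, dbc.symm]⟩
    · omega
    · interval_cases j
      · exact ⟨(bb, 1), by simp, hbb, by simp [listCol, dbbv, dbba, hbb.ne', dbbc, dbbh]⟩
    · interval_cases j
      · exact ⟨(c1, 1), by simp, hcc1, by simp [listCol, dc1v, dc1a, dc1b, hcc1.ne', dc1h, dc1bb]⟩
      · exact ⟨(c2, 2), by simp, hcc2, by simp [listCol, dc2v, dc2a, dc2b, hcc2.ne', hc2h.ne, dc2bb, dc1c2.symm]⟩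
    · omega
    · omega
    · omega
    · interval_cases j
      · exact ⟨(hh, 1), by simp, hc2h, by simp [listCol, dhv, dha, dhb, dhc]⟩

lemma leafStuck {v a b c b1 b2 c1 c2 w wp : V} (hva : G.Adj v a) (hvb : G.Adj v b) (hvc : G.Adj v c)
    (hbb1 : G.Adj b b1) (hbb2 : G.Adj b b2) (hcc1 : G.Adj c c1) (hcc2 : G.Adj c c2)
    (hb2w : G.Adj b2 w) (hb2wp : G.Adj b2 wp) (hwwp : G.Adj w wp)
    (hc2w : G.Adj c2 w) (hc2wp : G.Adj c2 wp) (hb1c1 : G.Adj b1 c1)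
    (nab1 : ¬G.Adj a b1) (nab2 : ¬G.Adj a b2) (nb1b2 : ¬G.Adj b1 b2)
    (nac2 : ¬G.Adj a c2) (nb1c2 : ¬G.Adj b1 c2) (nb2c2 : ¬G.Adj b2 c2)
    (nbc1 : ¬G.Adj b c1) (nbwp : ¬G.Adj b wp) (nc1wp : ¬G.Adj c1 wp)
    (ncw : ¬G.Adj c w)
    (dab : a ≠ b) (dac : a ≠ c) (dbc : b ≠ c)
    (db1v : b1 ≠ v) (db1a : b1 ≠ a) (db1c : b1 ≠ c)
    (db2v : b2 ≠ v) (db2a : b2 ≠ a) (db2c : b2 ≠ c) (db2b1 : b2 ≠ b1)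
    (dc1v : c1 ≠ v) (dc1a : c1 ≠ a) (dc1b : c1 ≠ b) (dc1b2 : c1 ≠ b2)
    (dc2v : c2 ≠ v) (dc2a : c2 ≠ a) (dc2b : c2 ≠ b) (dc2b1 : c2 ≠ b1)
    (dc2b2 : c2 ≠ b2) (dc2c1 : c2 ≠ c1)
    (dwpv : wp ≠ v) (dwpa : wp ≠ a) (dwpb : wp ≠ b) (dwpc : wp ≠ c)
    (dwpb1 : wp ≠ b1) (dwpc1 : wp ≠ c1)
    : ∃ p : V → ℕ, GoodPartial G p ∧ ∃ t, p t = 4 := by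
  classical
  refine ⟨listCol [(v, 4), (a, 1), (b, 2), (c, 3), (b1, 1), (b2, 1), (c1, 2), (c2, 1), (w, 3), (wp, 2)], goodPartial_of_list G _ ?_ ?_ ?_, v, by simp⟩
  · intro q hq
    simp only [List.mem_cons, List.not_mem_nil, or_false] at hq
    rcases hq with rfl|rfl|rfl|rfl|rfl|rfl|rfl|rfl|rfl|rfl <;> simp
  · rintro ⟨xx, kk⟩ hq ⟨yy, ll⟩ hr heq hadj
    simp only [List.mem_cons, List.not_mem_nil, or_false, Prod.mk.injEq] at hq hr
    rcases hq with ⟨rfl, rfl⟩|⟨rfl, rfl⟩|⟨rfl, rfl⟩|⟨rfl, rfl⟩|⟨rfl, rfl⟩|⟨rfl, rfl⟩|⟨rfl, rfl⟩|⟨rfl, rfl⟩|⟨rfl, rfl⟩|⟨rfl, rfl⟩ <;> rcases hr with ⟨rfl, rfl⟩|⟨rfl, rfl⟩|⟨rfl, rfl⟩|⟨rfl, rfl⟩|⟨rfl, rfl⟩|⟨rfl, rfl⟩|⟨rfl, rfl⟩|⟨rfl, rfl⟩|⟨rfl, rfl⟩|⟨rfl, rfl⟩ <;>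
      first
        | omega
        | exact G.loopless.irrefl _ hadj
        | exact absurd hadj (by assumption)
        | exact absurd hadj.symm (by assumption)
  · rintro ⟨xx, kk⟩ hq j hj hjk
    simp only [List.mem_cons, List.not_mem_nil, or_false, Prod.mk.injEq] at hq
    rcases hq with ⟨rfl, rfl⟩|⟨rfl, rfl⟩|⟨rfl, rfl⟩|⟨rfl, rfl⟩|⟨rfl, rfl⟩|⟨rfl, rfl⟩|⟨rfl, rfl⟩|⟨rfl, rfl⟩|⟨rfl, rfl⟩|⟨rfl, rfl⟩
    · interval_cases j
      · exact ⟨(a, 1), by simp, hva, by simp [listCol, hva.ne']⟩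
      · exact ⟨(b, 2), by simp, hvb, by simp [listCol, hvb.ne', dab.symm]⟩
      · exact ⟨(c, 3), by simp, hvc, by simp [listCol, hvc.ne', dac.symm, dbc.symm]⟩
    · omega
    · interval_cases j
      · exact ⟨(b1, 1), by simp, hbb1, by simp [listCol, db1v, db1a, hbb1.ne', db1c]⟩
    · interval_cases j
      · exact ⟨(c2, 1), by simp, hcc2, by simp [listCol, dc2v, dc2a, dc2b, hcc2.ne', dc2b1, dc2b2, dc2c1]⟩
      · exact ⟨(c1, 2), by simp, hcc1, by simp [listCol, dc1v, dc1a, dc1b, hcc1.ne', hb1c1.ne', dc1b2]⟩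
    · omega
    · omega
    · interval_cases j
      · exact ⟨(b1, 1), by simp, hb1c1.symm, by simp [listCol, db1v, db1a, hbb1.ne', db1c]⟩
    · omega
    · interval_cases j
      · exact ⟨(b2, 1), by simp, hb2w.symm, by simp [listCol, db2v, db2a, hbb2.ne', db2c, db2b1]⟩
      · exact ⟨(wp, 2), by simp, hwwp, by simp [listCol, dwpv, dwpa, dwpb, dwpc, dwpb1, hb2wp.ne', dwpc1, hc2wp.ne', hwwp.ne']⟩
    · interval_cases j
      · exact ⟨(b2, 1), by simp, hb2wp.symm, by simp [listCol, db2v, db2a, hbb2.ne', db2c, db2b1]⟩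

lemma caseT0pair (hreg : G.IsRegularOfDegree 3)
    {v a b c b1 b2 c1 c2 : V}
    (hva : G.Adj v a) (hvb : G.Adj v b) (hvc : G.Adj v c)
    (nab : ¬G.Adj a b) (nac : ¬G.Adj a c) (nbc : ¬G.Adj b c)
    (dab : a ≠ b) (dac : a ≠ c) (dbc : b ≠ c)
    (hbb1 : G.Adj b b1) (hbb2 : G.Adj b b2) (db1b2 : b1 ≠ b2)
    (hcc1 : G.Adj c c1) (hcc2 : G.Adj c c2) (hc12 : G.Adj c1 c2)
    (nab1 : ¬G.Adj a b1) (nab2 : ¬G.Adj a b2) (nac1 : ¬G.Adj a c1) (nbc2 : ¬G.Adj b c2)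
    (db1v : b1 ≠ v) (db1a : b1 ≠ a) (db1c : b1 ≠ c)
    (db2v : b2 ≠ v) (db2a : b2 ≠ a) (db2c : b2 ≠ c)
    (dc1v : c1 ≠ v) (dc1a : c1 ≠ a) (dc1b : c1 ≠ b) (dc1b1 : c1 ≠ b1) (dc1b2 : c1 ≠ b2)
    (dc2v : c2 ≠ v) (dc2a : c2 ≠ a) (dc2b : c2 ≠ b) (dc2b1 : c2 ≠ b1) (dc2b2 : c2 ≠ b2) :
    ∃ p : V → ℕ, GoodPartial G p ∧ ∃ t, p t = 4 := by
  by_cases hb1c1 : G.Adj b1 c1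
  · have nb2c1 : ¬G.Adj b2 c1 := by
      intro h
      have hcl := deg3_closure G (hreg c1) hcc1.symm hc12 hb1c1.symm
        hcc2.ne db1c.symm dc2b1
      rcases hcl b2 h.symm with rfl | rfl | rfl
      · exact db2c rfl
      · exact dc2b2 rfl
      · exact db1b2 rfl
    exact leafL0pair G (hva := hva) (hvb := hvb) (hvc := hvc) (hbb := hbb2)
      (hcc1 := hcc1) (hcc2 := hcc2) (hc12 := hc12) (nab := nab) (nac := nac)
      (nbc := nbc) (nabb := nab2) (nac1 := nac1) (nbbc1 := nb2c1) (nbc2 := nbc2)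
      (dab := dab) (dac := dac) (dbc := dbc) (dbbv := db2v) (dbba := db2a)
      (dbbc := db2c) (dc1v := dc1v) (dc1a := dc1a) (dc1b := dc1b) (dc1bb := dc1b2)
      (dc2v := dc2v) (dc2a := dc2a) (dc2b := dc2b) (dc2bb := dc2b2)
  · exact leafL0pair G (hva := hva) (hvb := hvb) (hvc := hvc) (hbb := hbb1)
      (hcc1 := hcc1) (hcc2 := hcc2) (hc12 := hc12) (nab := nab) (nac := nac)
      (nbc := nbc) (nabb := nab1) (nac1 := nac1) (nbbc1 := hb1c1) (nbc2 := nbc2)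
      (dab := dab) (dac := dac) (dbc := dbc) (dbbv := db1v) (dbba := db1a)
      (dbbc := db1c) (dc1v := dc1v) (dc1a := dc1a) (dc1b := dc1b) (dc1bb := dc1b1)
      (dc2v := dc2v) (dc2a := dc2a) (dc2b := dc2b) (dc2bb := dc2b1)

lemma caseT0none (hreg : G.IsRegularOfDegree 3) (hC4 : ¬ HasInducedC4 G)
    {v a b c a1 a2 b1 b2 c1 c2 : V}
    (hva : G.Adj v a) (hvb : G.Adj v b) (hvc : G.Adj v c)
    (nab : ¬G.Adj a b) (nac : ¬G.Adj a c) (nbc : ¬G.Adj b c)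
    (dab : a ≠ b) (dac : a ≠ c) (dbc : b ≠ c)
    (haa1 : G.Adj a a1) (haa2 : G.Adj a a2) (da1a2 : a1 ≠ a2)
    (hbb1 : G.Adj b b1) (hbb2 : G.Adj b b2) (db1b2 : b1 ≠ b2)
    (hcc1 : G.Adj c c1) (hcc2 : G.Adj c c2) (dc1c2 : c1 ≠ c2)
    (nb1b2 : ¬G.Adj b1 b2) (nc1c2 : ¬G.Adj c1 c2)
    (hvcl : ∀ s, G.Adj v s → s = a ∨ s = b ∨ s = c)
    (hacl : ∀ s, G.Adj a s → s = v ∨ s = a1 ∨ s = a2)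
    (hbcl : ∀ s, G.Adj b s → s = v ∨ s = b1 ∨ s = b2)
    (hccl : ∀ s, G.Adj c s → s = v ∨ s = c1 ∨ s = c2)
    (hva1 : v ≠ a1) (hva2 : v ≠ a2) (hvb1 : v ≠ b1) (hvb2 : v ≠ b2)
    (hvc1 : v ≠ c1) (hvc2 : v ≠ c2) :
    ∃ p : V → ℕ, GoodPartial G p ∧ ∃ t, p t = 4 := by
  -- identity facts
  have db1a : b1 ≠ a := fun h => nab (h ▸ hbb1).symm
  have db1c : b1 ≠ c := fun h => nbc (h ▸ hbb1)
  have db2a : b2 ≠ a := fun h => nab (h ▸ hbb2).symm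
  have db2c : b2 ≠ c := fun h => nbc (h ▸ hbb2)
  have dc1a : c1 ≠ a := fun h => nac (h ▸ hcc1).symm
  have dc1b : c1 ≠ b := fun h => nbc (h ▸ hcc1).symm
  have dc2a : c2 ≠ a := fun h => nac (h ▸ hcc2).symm
  have dc2b : c2 ≠ b := fun h => nbc (h ▸ hcc2).symm
  have da1b : a1 ≠ b := fun h => nab (h ▸ haa1)
  have da1c : a1 ≠ c := fun h => nac (h ▸ haa1)
  have da2b : a2 ≠ b := fun h => nab (h ▸ haa2)
  have da2c : a2 ≠ c := fun h => nac (h ▸ haa2)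
  have da1a : a1 ≠ a := fun h => G.loopless.irrefl a (h ▸ haa1)
  have da2a : a2 ≠ a := fun h => G.loopless.irrefl a (h ▸ haa2)
  have db1b : b1 ≠ b := fun h => G.loopless.irrefl b (h ▸ hbb1)
  have db2b : b2 ≠ b := fun h => G.loopless.irrefl b (h ▸ hbb2)
  have dc1c : c1 ≠ c := fun h => G.loopless.irrefl c (h ▸ hcc1)
  have dc2c : c2 ≠ c := fun h => G.loopless.irrefl c (h ▸ hcc2)
  -- v is not adjacent to outer vertices
  have nva1 : ¬G.Adj v a1 := fun h => by
    rcases hvcl a1 h with rfl | rfl | rfl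
    exacts [da1a rfl, da1b rfl, da1c rfl]
  have nva2 : ¬G.Adj v a2 := fun h => by
    rcases hvcl a2 h with rfl | rfl | rfl
    exacts [da2a rfl, da2b rfl, da2c rfl]
  have nvb1 : ¬G.Adj v b1 := fun h => by
    rcases hvcl b1 h with rfl | rfl | rfl
    exacts [db1a rfl, db1b rfl, db1c rfl]
  have nvb2 : ¬G.Adj v b2 := fun h => by
    rcases hvcl b2 h with rfl | rfl | rfl
    exacts [db2a rfl, db2b rfl, db2c rfl]
  have nvc1 : ¬G.Adj v c1 := fun h => by
    rcases hvcl c1 h with rfl | rfl | rfl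
    exacts [dc1a rfl, dc1b rfl, dc1c rfl]
  have nvc2 : ¬G.Adj v c2 := fun h => by
    rcases hvcl c2 h with rfl | rfl | rfl
    exacts [dc2a rfl, dc2b rfl, dc2c rfl]
  -- outer vertices in different fans are distinct
  have da1b1 : a1 ≠ b1 := fun h =>
    no_common G hC4 dab nab hva hvb haa1.symm (by rw [h]; exact hbb1.symm) hva1 nva1
  have da1b2 : a1 ≠ b2 := fun h =>
    no_common G hC4 dab nab hva hvb haa1.symm (by rw [h]; exact hbb2.symm) hva1 nva1
  have da2b1 : a2 ≠ b1 := fun h =>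
    no_common G hC4 dab nab hva hvb haa2.symm (by rw [h]; exact hbb1.symm) hva2 nva2
  have da2b2 : a2 ≠ b2 := fun h =>
    no_common G hC4 dab nab hva hvb haa2.symm (by rw [h]; exact hbb2.symm) hva2 nva2
  have da1c1 : a1 ≠ c1 := fun h =>
    no_common G hC4 dac nac hva hvc haa1.symm (by rw [h]; exact hcc1.symm) hva1 nva1
  have da1c2 : a1 ≠ c2 := fun h =>
    no_common G hC4 dac nac hva hvc haa1.symm (by rw [h]; exact hcc2.symm) hva1 nva1
  have da2c1 : a2 ≠ c1 := fun h =>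
    no_common G hC4 dac nac hva hvc haa2.symm (by rw [h]; exact hcc1.symm) hva2 nva2
  have da2c2 : a2 ≠ c2 := fun h =>
    no_common G hC4 dac nac hva hvc haa2.symm (by rw [h]; exact hcc2.symm) hva2 nva2
  have db1c1 : b1 ≠ c1 := fun h =>
    no_common G hC4 dbc nbc hvb hvc hbb1.symm (by rw [h]; exact hcc1.symm) hvb1 nvb1
  have db1c2 : b1 ≠ c2 := fun h =>
    no_common G hC4 dbc nbc hvb hvc hbb1.symm (by rw [h]; exact hcc2.symm) hvb1 nvb1
  have db2c1 : b2 ≠ c1 := fun h =>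
    no_common G hC4 dbc nbc hvb hvc hbb2.symm (by rw [h]; exact hcc1.symm) hvb2 nvb2
  have db2c2 : b2 ≠ c2 := fun h =>
    no_common G hC4 dbc nbc hvb hvc hbb2.symm (by rw [h]; exact hcc2.symm) hvb2 nvb2
  -- cross nonadjacencies
  have nab1 : ¬G.Adj a b1 := fun h => by
    rcases hacl b1 h with rfl | rfl | rfl
    exacts [hvb1 rfl, da1b1 rfl, da2b1 rfl]
  have nab2 : ¬G.Adj a b2 := fun h => by
    rcases hacl b2 h with rfl | rfl | rfl
    exacts [hvb2 rfl, da1b2 rfl, da2b2 rfl]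
  have nac1 : ¬G.Adj a c1 := fun h => by
    rcases hacl c1 h with rfl | rfl | rfl
    exacts [hvc1 rfl, da1c1 rfl, da2c1 rfl]
  have nac2 : ¬G.Adj a c2 := fun h => by
    rcases hacl c2 h with rfl | rfl | rfl
    exacts [hvc2 rfl, da1c2 rfl, da2c2 rfl]
  have nba1 : ¬G.Adj b a1 := fun h => by
    rcases hbcl a1 h with rfl | rfl | rfl
    exacts [hva1 rfl, da1b1 rfl.symm, da1b2 rfl.symm]
  have nba2 : ¬G.Adj b a2 := fun h => by
    rcases hbcl a2 h with rfl | rfl | rfl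
    exacts [hva2 rfl, da2b1 rfl.symm, da2b2 rfl.symm]
  have nbc1 : ¬G.Adj b c1 := fun h => by
    rcases hbcl c1 h with rfl | rfl | rfl
    exacts [hvc1 rfl, db1c1 rfl, db2c1 rfl]
  have nbc2 : ¬G.Adj b c2 := fun h => by
    rcases hbcl c2 h with rfl | rfl | rfl
    exacts [hvc2 rfl, db1c2 rfl, db2c2 rfl]
  have nca1 : ¬G.Adj c a1 := fun h => by
    rcases hccl a1 h with rfl | rfl | rfl
    exacts [hva1 rfl, da1c1 rfl.symm, da1c2 rfl.symm]
  have nca2 : ¬G.Adj c a2 := fun h => by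
    rcases hccl a2 h with rfl | rfl | rfl
    exacts [hva2 rfl, da2c1 rfl.symm, da2c2 rfl.symm]
  have ncb1 : ¬G.Adj c b1 := fun h => by
    rcases hccl b1 h with rfl | rfl | rfl
    exacts [hvb1 rfl, db1c1 rfl.symm, db1c2 rfl.symm]
  have ncb2 : ¬G.Adj c b2 := fun h => by
    rcases hccl b2 h with rfl | rfl | rfl
    exacts [hvb2 rfl, db2c1 rfl.symm, db2c2 rfl.symm]
  -- the two other neighbors of c2
  obtain ⟨w, wp, hc2w, hc2wp, dcw, dcwp, dwwp, hc2cl⟩ := deg3_third G (hreg c2) hcc2.symm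
  -- identify w, wp relative to the named vertices
  have dwv : w ≠ v := fun h => nvc2 (h ▸ hc2w).symm
  have dwa : w ≠ a := fun h => nac2 (h ▸ hc2w).symm
  have dwb : w ≠ b := fun h => nbc2 (h ▸ hc2w).symm
  have dwc : w ≠ c := fun h => dcw h.symm
  have dwc1 : w ≠ c1 := fun h => nc1c2 (h ▸ hc2w).symm
  have dwc2 : w ≠ c2 := fun h => G.loopless.irrefl c2 (h ▸ hc2w)
  have dwpv : wp ≠ v := fun h => nvc2 (h ▸ hc2wp).symm
  have dwpa : wp ≠ a := fun h => nac2 (h ▸ hc2wp).symm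
  have dwpb : wp ≠ b := fun h => nbc2 (h ▸ hc2wp).symm
  have dwpc : wp ≠ c := fun h => dcwp h.symm
  have dwpc1 : wp ≠ c1 := fun h => nc1c2 (h ▸ hc2wp).symm
  have ncw : ¬G.Adj c w := fun h => by
    rcases hccl w h with rfl | rfl | rfl
    exacts [dwv rfl, dwc1 rfl, dwc2 rfl]
  have ncwp : ¬G.Adj c wp := fun h => by
    rcases hccl wp h with rfl | rfl | rfl
    exacts [dwpv rfl, dwpc1 rfl, G.loopless.irrefl _ hc2wp]
  have nvw : ¬G.Adj v w := fun h => by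
    rcases hvcl w h with rfl | rfl | rfl
    exacts [dwa rfl, dwb rfl, dwc rfl]
  have nvwp : ¬G.Adj v wp := fun h => by
    rcases hvcl wp h with rfl | rfl | rfl
    exacts [dwpa rfl, dwpb rfl, dwpc rfl]
  have nc1w : ¬G.Adj c1 w := fun h =>
    no_common G hC4 dc1c2 nc1c2 hcc1 hcc2 h.symm hc2w.symm dcw ncw
  have nc1wp : ¬G.Adj c1 wp := fun h =>
    no_common G hC4 dc1c2 nc1c2 hcc1 hcc2 h.symm hc2wp.symm dcwp ncwp
  by_cases haw : G.Adj a w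
  · have nbw : ¬G.Adj b w := fun h =>
      no_common G hC4 dab nab hva hvb haw.symm h.symm dwv.symm nvw
    exact leafN1 G (hva := hva) (hvb := hvb) (hvc := hvc) (haw := haw) (hc2w := hc2w)
      (hcc1 := hcc1) (hcc2 := hcc2) (nab := nab) (nac := nac) (nbc := nbc)
      (nbw := nbw) (nbc1 := nbc1) (nc1w := nc1w) (nac2 := nac2) (nac1 := nac1)
      (ncw := ncw) (nc1c2 := nc1c2) (dab := dab) (dac := dac) (dbc := dbc)
      (dwv := dwv) (dwb := dwb) (dwc := dwc) (dc1v := hvc1.symm) (dc1a := dc1a)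
      (dc1b := dc1b) (dc1w := dwc1.symm) (dc2v := hvc2.symm) (dc2a := dc2a)
      (dc2b := dc2b) (dc1c2 := dc1c2)
  by_cases hbw : G.Adj b w
  · exact leafN2 G (hva := hva) (hvb := hvb) (hvc := hvc) (hbw := hbw) (hc2w := hc2w)
      (hcc1 := hcc1) (hcc2 := hcc2) (nab := nab) (nac := nac) (nbc := nbc)
      (naw := haw) (nac1 := nac1) (nc1w := nc1w) (nbc2 := nbc2) (nbc1 := nbc1)
      (ncw := ncw) (nc1c2 := nc1c2) (dab := dab) (dac := dac) (dbc := dbc)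
      (dwv := dwv) (dwa := dwa) (dwc := dwc) (dc1v := hvc1.symm) (dc1a := dc1a)
      (dc1b := dc1b) (dc1w := dwc1.symm) (dc2v := hvc2.symm) (dc2a := dc2a)
      (dc2b := dc2b) (dc1c2 := dc1c2)
  by_cases hawp : G.Adj a wp
  · have nbwp : ¬G.Adj b wp := fun h =>
      no_common G hC4 dab nab hva hvb hawp.symm h.symm dwpv.symm nvwp
    exact leafN1 G (hva := hva) (hvb := hvb) (hvc := hvc) (haw := hawp) (hc2w := hc2wp)
      (hcc1 := hcc1) (hcc2 := hcc2) (nab := nab) (nac := nac) (nbc := nbc)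
      (nbw := nbwp) (nbc1 := nbc1) (nc1w := nc1wp) (nac2 := nac2) (nac1 := nac1)
      (ncw := ncwp) (nc1c2 := nc1c2) (dab := dab) (dac := dac) (dbc := dbc)
      (dwv := dwpv) (dwb := dwpb) (dwc := dwpc) (dc1v := hvc1.symm) (dc1a := dc1a)
      (dc1b := dc1b) (dc1w := dwpc1.symm) (dc2v := hvc2.symm) (dc2a := dc2a)
      (dc2b := dc2b) (dc1c2 := dc1c2)
  by_cases hbwp : G.Adj b wp
  · exact leafN2 G (hva := hva) (hvb := hvb) (hvc := hvc) (hbw := hbwp) (hc2w := hc2wp)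
      (hcc1 := hcc1) (hcc2 := hcc2) (nab := nab) (nac := nac) (nbc := nbc)
      (naw := hawp) (nac1 := nac1) (nc1w := nc1wp) (nbc2 := nbc2) (nbc1 := nbc1)
      (ncw := ncwp) (nc1c2 := nc1c2) (dab := dab) (dac := dac) (dbc := dbc)
      (dwv := dwpv) (dwa := dwpa) (dwc := dwpc) (dc1v := hvc1.symm) (dc1a := dc1a)
      (dc1b := dc1b) (dc1w := dwpc1.symm) (dc2v := hvc2.symm) (dc2a := dc2a)
      (dc2b := dc2b) (dc1c2 := dc1c2)
  -- now w, wp are adjacent to neither a nor b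
  have db1w : b1 ≠ w := fun h => hbw (h ▸ hbb1)
  have db2w : b2 ≠ w := fun h => hbw (h ▸ hbb2)
  have db1wp : b1 ≠ wp := fun h => hbwp (h ▸ hbb1)
  have db2wp : b2 ≠ wp := fun h => hbwp (h ▸ hbb2)
  have nb1c2 : ¬G.Adj b1 c2 := fun h => by
    rcases hc2cl b1 h.symm with rfl | rfl | rfl
    exacts [db1c rfl, db1w rfl, db1wp rfl]
  have nb2c2 : ¬G.Adj b2 c2 := fun h => by
    rcases hc2cl b2 h.symm with rfl | rfl | rfl
    exacts [db2c rfl, db2w rfl, db2wp rfl]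
  have nc2b1 : ¬G.Adj c2 b1 := fun h => nb1c2 h.symm
  have nc2b2 : ¬G.Adj c2 b2 := fun h => nb2c2 h.symm
  by_cases hb1c1 : G.Adj b1 c1
  · -- b1 is blocked by c1; at most one of b1 b2 is adjacent to c1
    have nb2c1 : ¬G.Adj b2 c1 := fun h =>
      no_common G hC4 db1b2 nb1b2 hbb1 hbb2 hb1c1.symm h.symm dc1b.symm nbc1
    by_cases hb2w : G.Adj b2 w
    · by_cases hb2wp : G.Adj b2 wp
      · -- the stuck configuration
        have hwwp : G.Adj w wp := by
          by_contra hn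
          exact no_common G hC4 dwwp hn hc2w hc2wp hb2w hb2wp
            db2c2.symm nc2b2
        exact leafStuck G (hva := hva) (hvb := hvb) (hvc := hvc) (hbb1 := hbb1)
          (hbb2 := hbb2) (hcc1 := hcc1) (hcc2 := hcc2) (hb2w := hb2w)
          (hb2wp := hb2wp) (hwwp := hwwp) (hc2w := hc2w) (hc2wp := hc2wp)
          (hb1c1 := hb1c1) (nab1 := nab1) (nab2 := nab2) (nb1b2 := nb1b2)
          (nac2 := nac2) (nb1c2 := nb1c2) (nb2c2 := nb2c2) (nbc1 := nbc1)
          (nbwp := hbwp) (nc1wp := nc1wp) (ncw := ncw)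
          (dab := dab) (dac := dac) (dbc := dbc)
          (db1v := hvb1.symm) (db1a := db1a) (db1c := db1c)
          (db2v := hvb2.symm) (db2a := db2a) (db2c := db2c) (db2b1 := db1b2.symm)
          (dc1v := hvc1.symm) (dc1a := dc1a) (dc1b := dc1b) (dc1b2 := db2c1.symm)
          (dc2v := hvc2.symm) (dc2a := dc2a) (dc2b := dc2b) (dc2b1 := db1c2.symm)
          (dc2b2 := db2c2.symm) (dc2c1 := dc1c2.symm)
          (dwpv := dwpv) (dwpa := dwpa) (dwpb := dwpb) (dwpc := dwpc)
          (dwpb1 := db1wp.symm) (dwpc1 := dwpc1)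
      · -- use b2 with helper wp
        exact leafN3good G (hva := hva) (hvb := hvb) (hvc := hvc) (hbb := hbb2)
          (hc2h := hc2wp) (hcc1 := hcc1) (hcc2 := hcc2) (nab := nab) (nac := nac)
          (nbc := nbc) (nah := hawp) (nabb := nab2) (nac1 := nac1)
          (nbbh := hb2wp) (nc1h := nc1wp) (nbbc1 := nb2c1) (nbc2 := nbc2)
          (nbh := hbwp) (nch := ncwp) (nvh := nvwp) (nc1c2 := nc1c2)
          (dab := dab) (dac := dac) (dbc := dbc)
          (dhv := dwpv) (dha := dwpa) (dhb := dwpb) (dhc := dwpc)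
          (dbbv := hvb2.symm) (dbba := db2a) (dbbc := db2c) (dbbh := db2wp)
          (dc1v := hvc1.symm) (dc1a := dc1a) (dc1b := dc1b) (dc1h := dwpc1.symm)
          (dc1bb := db2c1.symm) (dc2v := hvc2.symm) (dc2a := dc2a) (dc2b := dc2b)
          (dc2bb := db2c2.symm) (dc1c2 := dc1c2)
    · -- use b2 with helper w
      exact leafN3good G (hva := hva) (hvb := hvb) (hvc := hvc) (hbb := hbb2)
        (hc2h := hc2w) (hcc1 := hcc1) (hcc2 := hcc2) (nab := nab) (nac := nac)
        (nbc := nbc) (nah := haw) (nabb := nab2) (nac1 := nac1)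
        (nbbh := hb2w) (nc1h := nc1w) (nbbc1 := nb2c1) (nbc2 := nbc2)
        (nbh := hbw) (nch := ncw) (nvh := nvw) (nc1c2 := nc1c2)
        (dab := dab) (dac := dac) (dbc := dbc)
        (dhv := dwv) (dha := dwa) (dhb := dwb) (dhc := dwc)
        (dbbv := hvb2.symm) (dbba := db2a) (dbbc := db2c) (dbbh := db2w)
        (dc1v := hvc1.symm) (dc1a := dc1a) (dc1b := dc1b) (dc1h := dwc1.symm)
        (dc1bb := db2c1.symm) (dc2v := hvc2.symm) (dc2a := dc2a) (dc2b := dc2b)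
        (dc2bb := db2c2.symm) (dc1c2 := dc1c2)
  · -- b1 is not blocked by c1
    by_cases hb1w : G.Adj b1 w
    · by_cases hb1wp : G.Adj b1 wp
      · -- b1 adjacent to both w and wp; examine b2
        by_cases hb2c1 : G.Adj b2 c1
        · -- swapped stuck configuration
          have hwwp : G.Adj w wp := by
            by_contra hn
            exact no_common G hC4 dwwp hn hc2w hc2wp hb1w hb1wp
              db1c2.symm nc2b1
          exact leafStuck G (hva := hva) (hvb := hvb) (hvc := hvc) (hbb1 := hbb2)
            (hbb2 := hbb1) (hcc1 := hcc1) (hcc2 := hcc2) (hb2w := hb1w)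
            (hb2wp := hb1wp) (hwwp := hwwp) (hc2w := hc2w) (hc2wp := hc2wp)
            (hb1c1 := hb2c1) (nab1 := nab2) (nab2 := nab1)
            (nb1b2 := fun h => nb1b2 h.symm)
            (nac2 := nac2) (nb1c2 := nb2c2) (nb2c2 := nb1c2) (nbc1 := nbc1)
            (nbwp := hbwp) (nc1wp := nc1wp) (ncw := ncw)
            (dab := dab) (dac := dac) (dbc := dbc)
            (db1v := hvb2.symm) (db1a := db2a) (db1c := db2c)
            (db2v := hvb1.symm) (db2a := db1a) (db2c := db1c) (db2b1 := db1b2)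
            (dc1v := hvc1.symm) (dc1a := dc1a) (dc1b := dc1b) (dc1b2 := db1c1.symm)
            (dc2v := hvc2.symm) (dc2a := dc2a) (dc2b := dc2b) (dc2b1 := db2c2.symm)
            (dc2b2 := db1c2.symm) (dc2c1 := dc1c2.symm)
            (dwpv := dwpv) (dwpa := dwpa) (dwpb := dwpb) (dwpc := dwpc)
            (dwpb1 := db2wp.symm) (dwpc1 := dwpc1)
        · by_cases hb2w : G.Adj b2 w
          · by_cases hb2wp : G.Adj b2 wp
            · -- b1 and b2 both adjacent to both w and wp: impossible
              exfalso
              have nwwp : ¬G.Adj w wp := by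
                intro h
                have hcl := deg3_closure G (hreg w) hc2w.symm hb1w.symm hb2w.symm
                  db1c2.symm db2c2.symm db1b2
                rcases hcl wp h with rfl | rfl | rfl
                exacts [G.loopless.irrefl _ hc2wp, G.loopless.irrefl _ hb1wp, G.loopless.irrefl _ hb2wp]
              exact no_common G hC4 dwwp nwwp hc2w hc2wp hb1w hb1wp
                db1c2.symm nc2b1
            · -- use b2 with helper wp
              exact leafN3good G (hva := hva) (hvb := hvb) (hvc := hvc) (hbb := hbb2)
                (hc2h := hc2wp) (hcc1 := hcc1) (hcc2 := hcc2) (nab := nab) (nac := nac)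
                (nbc := nbc) (nah := hawp) (nabb := nab2) (nac1 := nac1)
                (nbbh := hb2wp) (nc1h := nc1wp) (nbbc1 := hb2c1) (nbc2 := nbc2)
                (nbh := hbwp) (nch := ncwp) (nvh := nvwp) (nc1c2 := nc1c2)
                (dab := dab) (dac := dac) (dbc := dbc)
                (dhv := dwpv) (dha := dwpa) (dhb := dwpb) (dhc := dwpc)
                (dbbv := hvb2.symm) (dbba := db2a) (dbbc := db2c) (dbbh := db2wp)
                (dc1v := hvc1.symm) (dc1a := dc1a) (dc1b := dc1b) (dc1h := dwpc1.symm)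
                (dc1bb := db2c1.symm) (dc2v := hvc2.symm) (dc2a := dc2a) (dc2b := dc2b)
                (dc2bb := db2c2.symm) (dc1c2 := dc1c2)
          · -- use b2 with helper w
            exact leafN3good G (hva := hva) (hvb := hvb) (hvc := hvc) (hbb := hbb2)
              (hc2h := hc2w) (hcc1 := hcc1) (hcc2 := hcc2) (nab := nab) (nac := nac)
              (nbc := nbc) (nah := haw) (nabb := nab2) (nac1 := nac1)
              (nbbh := hb2w) (nc1h := nc1w) (nbbc1 := hb2c1) (nbc2 := nbc2)
              (nbh := hbw) (nch := ncw) (nvh := nvw) (nc1c2 := nc1c2)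
              (dab := dab) (dac := dac) (dbc := dbc)
              (dhv := dwv) (dha := dwa) (dhb := dwb) (dhc := dwc)
              (dbbv := hvb2.symm) (dbba := db2a) (dbbc := db2c) (dbbh := db2w)
              (dc1v := hvc1.symm) (dc1a := dc1a) (dc1b := dc1b) (dc1h := dwc1.symm)
              (dc1bb := db2c1.symm) (dc2v := hvc2.symm) (dc2a := dc2a) (dc2b := dc2b)
              (dc2bb := db2c2.symm) (dc1c2 := dc1c2)
      · -- use b1 with helper wp
        exact leafN3good G (hva := hva) (hvb := hvb) (hvc := hvc) (hbb := hbb1)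
          (hc2h := hc2wp) (hcc1 := hcc1) (hcc2 := hcc2) (nab := nab) (nac := nac)
          (nbc := nbc) (nah := hawp) (nabb := nab1) (nac1 := nac1)
          (nbbh := hb1wp) (nc1h := nc1wp) (nbbc1 := hb1c1) (nbc2 := nbc2)
          (nbh := hbwp) (nch := ncwp) (nvh := nvwp) (nc1c2 := nc1c2)
          (dab := dab) (dac := dac) (dbc := dbc)
          (dhv := dwpv) (dha := dwpa) (dhb := dwpb) (dhc := dwpc)
          (dbbv := hvb1.symm) (dbba := db1a) (dbbc := db1c) (dbbh := db1wp)
          (dc1v := hvc1.symm) (dc1a := dc1a) (dc1b := dc1b) (dc1h := dwpc1.symm)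
          (dc1bb := db1c1.symm) (dc2v := hvc2.symm) (dc2a := dc2a) (dc2b := dc2b)
          (dc2bb := db1c2.symm) (dc1c2 := dc1c2)
    · -- use b1 with helper w
      exact leafN3good G (hva := hva) (hvb := hvb) (hvc := hvc) (hbb := hbb1)
        (hc2h := hc2w) (hcc1 := hcc1) (hcc2 := hcc2) (nab := nab) (nac := nac)
        (nbc := nbc) (nah := haw) (nabb := nab1) (nac1 := nac1)
        (nbbh := hb1w) (nc1h := nc1w) (nbbc1 := hb1c1) (nbc2 := nbc2)
        (nbh := hbw) (nch := ncw) (nvh := nvw) (nc1c2 := nc1c2)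
        (dab := dab) (dac := dac) (dbc := dbc)
        (dhv := dwv) (dha := dwa) (dhb := dwb) (dhc := dwc)
        (dbbv := hvb1.symm) (dbba := db1a) (dbbc := db1c) (dbbh := db1w)
        (dc1v := hvc1.symm) (dc1a := dc1a) (dc1b := dc1b) (dc1h := dwc1.symm)
        (dc1bb := db1c1.symm) (dc2v := hvc2.symm) (dc2a := dc2a) (dc2b := dc2b)
        (dc2bb := db1c2.symm) (dc1c2 := dc1c2)

lemma caseT0 (hreg : G.IsRegularOfDegree 3) (hC4 : ¬ HasInducedC4 G)
    {v a b c : V} (hva : G.Adj v a) (hvb : G.Adj v b) (hvc : G.Adj v c)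
    (nab : ¬G.Adj a b) (nac : ¬G.Adj a c) (nbc : ¬G.Adj b c)
    (dab : a ≠ b) (dac : a ≠ c) (dbc : b ≠ c) :
    ∃ p : V → ℕ, GoodPartial G p ∧ ∃ t, p t = 4 := by
  obtain ⟨a1, a2, haa1, haa2, hva1, hva2, da1a2, hacl⟩ := deg3_third G (hreg a) hva.symm
  obtain ⟨b1, b2, hbb1, hbb2, hvb1, hvb2, db1b2, hbcl⟩ := deg3_third G (hreg b) hvb.symm
  obtain ⟨c1, c2, hcc1, hcc2, hvc1, hvc2, dc1c2, hccl⟩ := deg3_third G (hreg c) hvc.symm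
  have hvcl := deg3_closure G (hreg v) hva hvb hvc dab dac dbc
  have db1a : b1 ≠ a := fun h => nab (h ▸ hbb1).symm
  have db1c : b1 ≠ c := fun h => nbc (h ▸ hbb1)
  have db2a : b2 ≠ a := fun h => nab (h ▸ hbb2).symm
  have db2c : b2 ≠ c := fun h => nbc (h ▸ hbb2)
  have dc1a : c1 ≠ a := fun h => nac (h ▸ hcc1).symm
  have dc1b : c1 ≠ b := fun h => nbc (h ▸ hcc1).symm
  have dc2a : c2 ≠ a := fun h => nac (h ▸ hcc2).symm
  have dc2b : c2 ≠ b := fun h => nbc (h ▸ hcc2).symm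
  have da1b : a1 ≠ b := fun h => nab (h ▸ haa1)
  have da1c : a1 ≠ c := fun h => nac (h ▸ haa1)
  have da2b : a2 ≠ b := fun h => nab (h ▸ haa2)
  have da2c : a2 ≠ c := fun h => nac (h ▸ haa2)
  have da1a : a1 ≠ a := fun h => G.loopless.irrefl a (h ▸ haa1)
  have da2a : a2 ≠ a := fun h => G.loopless.irrefl a (h ▸ haa2)
  have db1b : b1 ≠ b := fun h => G.loopless.irrefl b (h ▸ hbb1)
  have db2b : b2 ≠ b := fun h => G.loopless.irrefl b (h ▸ hbb2)
  have dc1c : c1 ≠ c := fun h => G.loopless.irrefl c (h ▸ hcc1)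
  have dc2c : c2 ≠ c := fun h => G.loopless.irrefl c (h ▸ hcc2)
  have nva1 : ¬G.Adj v a1 := fun h => by
    rcases hvcl a1 h with rfl | rfl | rfl
    exacts [da1a rfl, da1b rfl, da1c rfl]
  have nva2 : ¬G.Adj v a2 := fun h => by
    rcases hvcl a2 h with rfl | rfl | rfl
    exacts [da2a rfl, da2b rfl, da2c rfl]
  have nvb1 : ¬G.Adj v b1 := fun h => by
    rcases hvcl b1 h with rfl | rfl | rfl
    exacts [db1a rfl, db1b rfl, db1c rfl]
  have nvb2 : ¬G.Adj v b2 := fun h => by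
    rcases hvcl b2 h with rfl | rfl | rfl
    exacts [db2a rfl, db2b rfl, db2c rfl]
  have nvc1 : ¬G.Adj v c1 := fun h => by
    rcases hvcl c1 h with rfl | rfl | rfl
    exacts [dc1a rfl, dc1b rfl, dc1c rfl]
  have nvc2 : ¬G.Adj v c2 := fun h => by
    rcases hvcl c2 h with rfl | rfl | rfl
    exacts [dc2a rfl, dc2b rfl, dc2c rfl]
  have da1b1 : a1 ≠ b1 := fun h =>
    no_common G hC4 dab nab hva hvb haa1.symm (by rw [h]; exact hbb1.symm) hva1 nva1
  have da1b2 : a1 ≠ b2 := fun h =>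
    no_common G hC4 dab nab hva hvb haa1.symm (by rw [h]; exact hbb2.symm) hva1 nva1
  have da2b1 : a2 ≠ b1 := fun h =>
    no_common G hC4 dab nab hva hvb haa2.symm (by rw [h]; exact hbb1.symm) hva2 nva2
  have da2b2 : a2 ≠ b2 := fun h =>
    no_common G hC4 dab nab hva hvb haa2.symm (by rw [h]; exact hbb2.symm) hva2 nva2
  have da1c1 : a1 ≠ c1 := fun h =>
    no_common G hC4 dac nac hva hvc haa1.symm (by rw [h]; exact hcc1.symm) hva1 nva1
  have da1c2 : a1 ≠ c2 := fun h =>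
    no_common G hC4 dac nac hva hvc haa1.symm (by rw [h]; exact hcc2.symm) hva1 nva1
  have da2c1 : a2 ≠ c1 := fun h =>
    no_common G hC4 dac nac hva hvc haa2.symm (by rw [h]; exact hcc1.symm) hva2 nva2
  have da2c2 : a2 ≠ c2 := fun h =>
    no_common G hC4 dac nac hva hvc haa2.symm (by rw [h]; exact hcc2.symm) hva2 nva2
  have db1c1 : b1 ≠ c1 := fun h =>
    no_common G hC4 dbc nbc hvb hvc hbb1.symm (by rw [h]; exact hcc1.symm) hvb1 nvb1
  have db1c2 : b1 ≠ c2 := fun h =>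
    no_common G hC4 dbc nbc hvb hvc hbb1.symm (by rw [h]; exact hcc2.symm) hvb1 nvb1
  have db2c1 : b2 ≠ c1 := fun h =>
    no_common G hC4 dbc nbc hvb hvc hbb2.symm (by rw [h]; exact hcc1.symm) hvb2 nvb2
  have db2c2 : b2 ≠ c2 := fun h =>
    no_common G hC4 dbc nbc hvb hvc hbb2.symm (by rw [h]; exact hcc2.symm) hvb2 nvb2
  have nab1 : ¬G.Adj a b1 := fun h => by
    rcases hacl b1 h with rfl | rfl | rfl
    exacts [hvb1 rfl, da1b1 rfl, da2b1 rfl]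
  have nab2 : ¬G.Adj a b2 := fun h => by
    rcases hacl b2 h with rfl | rfl | rfl
    exacts [hvb2 rfl, da1b2 rfl, da2b2 rfl]
  have nac1 : ¬G.Adj a c1 := fun h => by
    rcases hacl c1 h with rfl | rfl | rfl
    exacts [hvc1 rfl, da1c1 rfl, da2c1 rfl]
  have nac2 : ¬G.Adj a c2 := fun h => by
    rcases hacl c2 h with rfl | rfl | rfl
    exacts [hvc2 rfl, da1c2 rfl, da2c2 rfl]
  have nba1 : ¬G.Adj b a1 := fun h => by
    rcases hbcl a1 h with rfl | rfl | rfl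
    exacts [hva1 rfl, da1b1 rfl.symm, da1b2 rfl.symm]
  have nba2 : ¬G.Adj b a2 := fun h => by
    rcases hbcl a2 h with rfl | rfl | rfl
    exacts [hva2 rfl, da2b1 rfl.symm, da2b2 rfl.symm]
  have nbc1 : ¬G.Adj b c1 := fun h => by
    rcases hbcl c1 h with rfl | rfl | rfl
    exacts [hvc1 rfl, db1c1 rfl, db2c1 rfl]
  have nbc2 : ¬G.Adj b c2 := fun h => by
    rcases hbcl c2 h with rfl | rfl | rfl
    exacts [hvc2 rfl, db1c2 rfl, db2c2 rfl]
  have nca1 : ¬G.Adj c a1 := fun h => by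
    rcases hccl a1 h with rfl | rfl | rfl
    exacts [hva1 rfl, da1c1 rfl.symm, da1c2 rfl.symm]
  have nca2 : ¬G.Adj c a2 := fun h => by
    rcases hccl a2 h with rfl | rfl | rfl
    exacts [hva2 rfl, da2c1 rfl.symm, da2c2 rfl.symm]
  have ncb1 : ¬G.Adj c b1 := fun h => by
    rcases hccl b1 h with rfl | rfl | rfl
    exacts [hvb1 rfl, db1c1 rfl.symm, db1c2 rfl.symm]
  have ncb2 : ¬G.Adj c b2 := fun h => by
    rcases hccl b2 h with rfl | rfl | rfl
    exacts [hvb2 rfl, db2c1 rfl.symm, db2c2 rfl.symm]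
  by_cases hcc : G.Adj c1 c2
  · exact caseT0pair G hreg (hva := hva) (hvb := hvb) (hvc := hvc)
      (nab := nab) (nac := nac) (nbc := nbc) (dab := dab) (dac := dac) (dbc := dbc)
      (hbb1 := hbb1) (hbb2 := hbb2) (db1b2 := db1b2)
      (hcc1 := hcc1) (hcc2 := hcc2) (hc12 := hcc)
      (nab1 := nab1) (nab2 := nab2) (nac1 := nac1) (nbc2 := nbc2)
      (db1v := hvb1.symm) (db1a := db1a) (db1c := db1c)
      (db2v := hvb2.symm) (db2a := db2a) (db2c := db2c)
      (dc1v := hvc1.symm) (dc1a := dc1a) (dc1b := dc1b)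
      (dc1b1 := db1c1.symm) (dc1b2 := db2c1.symm)
      (dc2v := hvc2.symm) (dc2a := dc2a) (dc2b := dc2b)
      (dc2b1 := db1c2.symm) (dc2b2 := db2c2.symm)
  by_cases hbb : G.Adj b1 b2
  · exact caseT0pair G hreg (hva := hva) (hvb := hvc) (hvc := hvb)
      (nab := nac) (nac := nab) (nbc := fun h => nbc h.symm)
      (dab := dac) (dac := dab) (dbc := dbc.symm)
      (hbb1 := hcc1) (hbb2 := hcc2) (db1b2 := dc1c2)
      (hcc1 := hbb1) (hcc2 := hbb2) (hc12 := hbb)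
      (nab1 := nac1) (nab2 := nac2) (nac1 := nab1) (nbc2 := ncb2)
      (db1v := hvc1.symm) (db1a := dc1a) (db1c := dc1b)
      (db2v := hvc2.symm) (db2a := dc2a) (db2c := dc2b)
      (dc1v := hvb1.symm) (dc1a := db1a) (dc1b := db1c)
      (dc1b1 := db1c1) (dc1b2 := db1c2)
      (dc2v := hvb2.symm) (dc2a := db2a) (dc2b := db2c)
      (dc2b1 := db2c1) (dc2b2 := db2c2)
  by_cases haa : G.Adj a1 a2
  · exact caseT0pair G hreg (hva := hvb) (hvb := hvc) (hvc := hva)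
      (nab := nbc) (nac := fun h => nab h.symm) (nbc := fun h => nac h.symm)
      (dab := dbc) (dac := dab.symm) (dbc := dac.symm)
      (hbb1 := hcc1) (hbb2 := hcc2) (db1b2 := dc1c2)
      (hcc1 := haa1) (hcc2 := haa2) (hc12 := haa)
      (nab1 := nbc1) (nab2 := nbc2) (nac1 := nba1) (nbc2 := nca2)
      (db1v := hvc1.symm) (db1a := dc1b) (db1c := dc1a)
      (db2v := hvc2.symm) (db2a := dc2b) (db2c := dc2a)
      (dc1v := hva1.symm) (dc1a := da1b) (dc1b := da1c)
      (dc1b1 := da1c1) (dc1b2 := da1c2)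
      (dc2v := hva2.symm) (dc2a := da2b) (dc2b := da2c)
      (dc2b1 := da2c1) (dc2b2 := da2c2)
  exact caseT0none G hreg hC4 (hva := hva) (hvb := hvb) (hvc := hvc)
    (nab := nab) (nac := nac) (nbc := nbc) (dab := dab) (dac := dac) (dbc := dbc)
    (haa1 := haa1) (haa2 := haa2) (da1a2 := da1a2)
    (hbb1 := hbb1) (hbb2 := hbb2) (db1b2 := db1b2)
    (hcc1 := hcc1) (hcc2 := hcc2) (dc1c2 := dc1c2)
    (nb1b2 := hbb) (nc1c2 := hcc)
    (hvcl := hvcl) (hacl := hacl) (hbcl := hbcl) (hccl := hccl)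
    (hva1 := hva1) (hva2 := hva2) (hvb1 := hvb1) (hvb2 := hvb2)
    (hvc1 := hvc1) (hvc2 := hvc2)

lemma caseT2 (hreg : G.IsRegularOfDegree 3) (hC4 : ¬ HasInducedC4 G)
    {v a b c : V} (hva : G.Adj v a) (hvb : G.Adj v b) (hvc : G.Adj v c)
    (hab : G.Adj a b) (hac : G.Adj a c) (nbc : ¬G.Adj b c) (dbc : b ≠ c) :
    ∃ p : V → ℕ, GoodPartial G p ∧ ∃ t, p t = 4 := by
  obtain ⟨x, hcx, dvx, dax, hccl⟩ := deg3_pair G (hreg c) hvc.symm hac.symm hva.ne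
  have dxb : x ≠ b := fun h => nbc ((h ▸ hcx).symm)
  have hvcl := deg3_closure G (hreg v) hva hvb hvc hab.ne hac.ne dbc
  have nvx : ¬G.Adj v x := fun h => by
    rcases hvcl x h with rfl | rfl | rfl
    exacts [dax rfl, dxb rfl, G.loopless.irrefl _ hcx]
  have nbx : ¬G.Adj b x := fun h =>
    no_common G hC4 dbc nbc hvb hvc h.symm hcx.symm dvx nvx
  by_cases hax : G.Adj a x
  · exact leafT2a G hva hvb hvc hab hac hax hcx nbc nbx dvx.symm dxb dbc.symm
  · obtain ⟨x1, x2', hxx1, _, dcx1, _, _, _⟩ := deg3_third G (hreg x) hcx.symm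
    have dx1v : x1 ≠ v := fun h => nvx (h ▸ hxx1).symm
    have dx1a : x1 ≠ a := fun h => hax (h ▸ hxx1).symm
    have dx1b : x1 ≠ b := fun h => nbx (h ▸ hxx1).symm
    have nax1 : ¬G.Adj a x1 := fun h => by
      have hacl := deg3_closure G (hreg a) hva.symm hab hac hvb.ne hvc.ne dbc
      rcases hacl x1 h with rfl | rfl | rfl
      exacts [dx1v rfl, dx1b rfl, dcx1.symm rfl]
    exact leafT2b G hva hvb hvc hab hac hcx hxx1 nbc nbx nax1 hax
      dvx.symm dax.symm dxb dbc.symm dx1v dx1a dx1b dcx1.symm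

lemma caseT1 (hreg : G.IsRegularOfDegree 3) (hC4 : ¬ HasInducedC4 G)
    {v a b c : V} (hva : G.Adj v a) (hvb : G.Adj v b) (hvc : G.Adj v c)
    (hab : G.Adj a b) (nac : ¬G.Adj a c) (nbc : ¬G.Adj b c)
    (dac : a ≠ c) (dbc : b ≠ c) :
    ∃ p : V → ℕ, GoodPartial G p ∧ ∃ t, p t = 4 := by
  obtain ⟨x, xp, hcx, hcxp, dvx, dvxp, dxxp, hccl⟩ := deg3_third G (hreg c) hvc.symm
  have dxa : x ≠ a := fun h => nac ((h ▸ hcx).symm)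
  have dxb : x ≠ b := fun h => nbc ((h ▸ hcx).symm)
  have dxpa : xp ≠ a := fun h => nac ((h ▸ hcxp).symm)
  have dxpb : xp ≠ b := fun h => nbc ((h ▸ hcxp).symm)
  have hvcl := deg3_closure G (hreg v) hva hvb hvc hab.ne dac dbc
  have nvx : ¬G.Adj v x := fun h => by
    rcases hvcl x h with rfl | rfl | rfl
    exacts [dxa rfl, dxb rfl, G.loopless.irrefl _ hcx]
  have nvxp : ¬G.Adj v xp := fun h => by
    rcases hvcl xp h with rfl | rfl | rfl
    exacts [dxpa rfl, dxpb rfl, G.loopless.irrefl _ hcxp]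
  have nax : ¬G.Adj a x := fun h =>
    no_common G hC4 dac nac hva hvc h.symm hcx.symm dvx nvx
  have nbxp : ¬G.Adj b xp := fun h =>
    no_common G hC4 dbc nbc hvb hvc h.symm hcxp.symm dvxp nvxp
  by_cases hxxp : G.Adj x xp
  · exact leafT1a G hva hvb hvc hab hcx hcxp hxxp nax nbxp nbc nac
      dvx.symm dxa dxb dbc.symm dac.symm dvxp.symm dxpa dxpb
  · exact caseT0 G hreg hC4 (v := c) (a := v) (b := x) (c := xp)
      hvc.symm hcx hcxp nvx nvxp hxxp dvx dvxp dxxp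

lemma existsGood [Nonempty V] (hreg : G.IsRegularOfDegree 3) (hC4 : ¬ HasInducedC4 G) :
    ∃ p : V → ℕ, GoodPartial G p ∧ ∃ t, p t = 4 := by
  classical
  obtain ⟨v⟩ := (inferInstance : Nonempty V)
  have hpos : 0 < (G.neighborFinset v).card := by
    rw [SimpleGraph.card_neighborFinset_eq_degree, hreg v]
    norm_num
  obtain ⟨a, ha⟩ := Finset.card_pos.mp hpos
  have hva : G.Adj v a := by simpa using ha
  obtain ⟨b, c, hvb, hvc, dab, dac, dbc, hvcl⟩ := deg3_third G (hreg v) hva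
  by_cases hab : G.Adj a b
  · by_cases hac : G.Adj a c
    · by_cases hbc : G.Adj b c
      · exact leafT3 G hva hvb hvc hab hac hbc
      · exact caseT2 G hreg hC4 hva hvb hvc hab hac hbc dbc
    · by_cases hbc : G.Adj b c
      · exact caseT2 G hreg hC4 (v := v) (a := b) (b := a) (c := c)
          hvb hva hvc hab.symm hbc hac dac
      · exact caseT1 G hreg hC4 hva hvb hvc hab hac hbc dac dbc
  · by_cases hac : G.Adj a c
    · by_cases hbc : G.Adj b c
      · exact caseT2 G hreg hC4 (v := v) (a := c) (b := a) (c := b)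
          hvc hva hvb hac.symm hbc.symm hab dab
      · exact caseT1 G hreg hC4 (v := v) (a := a) (b := c) (c := b)
          hva hvc hvb hac hab (fun h => hbc h.symm) dab dbc.symm
    · by_cases hbc : G.Adj b c
      · exact caseT1 G hreg hC4 (v := v) (a := b) (b := c) (c := a)
          hvb hvc hva hbc (fun h => hab h.symm) (fun h => hac h.symm) dab.symm dac.symm
      · exact caseT0 G hreg hC4 hva hvb hvc hab hac hbc dab dac dbc

end Leaves

section Final
variable [Fintype V] (G : SimpleGraph V) [DecidableRel G.Adj]

lemma grundyColorable_of_goodPartial (hdeg : ∀ x, G.degree x ≤ 3)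
    {p : V → ℕ} (hp : GoodPartial G p) {t : V} (ht : p t = 4) :
    GrundyColorable G 4 := by
  classical
  obtain ⟨c, hc, hctot, hagree⟩ := goodPartial_extend G hdeg
    (Finset.univ.filter (fun x => p x = 0)).card p hp le_rfl
  have hct : c t = 4 := by rw [hagree t (by omega), ht]
  refine ⟨c, ⟨fun v => by have := hctot v; omega,
    fun v w hadj => hc.1 v w hadj (hctot v) (hctot w),
    fun v j hj hlt => hc.2.2 v j hj hlt⟩, hc.2.1, ?_⟩
  intro j hj hjk
  rcases eq_or_lt_of_le hjk with h | h
  · exact ⟨t, by omega⟩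
  · obtain ⟨u, _, hu⟩ := hc.2.2 t j hj (by omega)
    exact ⟨u, hu⟩

end Final

theorem cubic_c4_free_grundy {V : Type*} [Fintype V] [Nonempty V]
    (G : SimpleGraph V) [DecidableRel G.Adj]
    (hreg : G.IsRegularOfDegree 3) (hC4 : ¬ HasInducedC4 G) :
    grundy G = 4 := by
  classical
  have hdeg : ∀ x, G.degree x ≤ 3 := fun x => le_of_eq (hreg x)
  obtain ⟨p, hp, t, ht⟩ := existsGood G hreg hC4
  have h4 : GrundyColorable G 4 := grundyColorable_of_goodPartial G hdeg hp ht
  have hub : ∀ k ∈ {k | GrundyColorable G k}, k ≤ 4 := by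
    intro k hk
    by_contra hlt
    push_neg at hlt
    obtain ⟨cc, ⟨hpos, hprop, hdom⟩, hle, hsurj⟩ := hk
    obtain ⟨x, hx⟩ := hsurj k (by omega) le_rfl
    obtain ⟨u1, hu1, hc1⟩ := hdom x 1 (by omega) (by rw [hx]; omega)
    obtain ⟨u2, hu2, hc2⟩ := hdom x 2 (by omega) (by rw [hx]; omega)
    obtain ⟨u3, hu3, hc3⟩ := hdom x 3 (by omega) (by rw [hx]; omega)
    obtain ⟨u4, hu4, hc4⟩ := hdom x 4 (by omega) (by rw [hx]; omega)
    have d12 : u1 ≠ u2 := fun h => by rw [h] at hc1; omega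
    have d13 : u1 ≠ u3 := fun h => by rw [h] at hc1; omega
    have d14 : u1 ≠ u4 := fun h => by rw [h] at hc1; omega
    have d23 : u2 ≠ u3 := fun h => by rw [h] at hc2; omega
    have d24 : u2 ≠ u4 := fun h => by rw [h] at hc2; omega
    have d34 : u3 ≠ u4 := fun h => by rw [h] at hc3; omega
    have hsub : ({u1, u2, u3, u4} : Finset V) ⊆ G.neighborFinset x := by
      intro y hy
      simp only [Finset.mem_insert, Finset.mem_singleton] at hy
      rcases hy with rfl | rfl | rfl | rfl
      exacts [by simpa using hu1, by simpa using hu2, by simpa using hu3,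
        by simpa using hu4]
    have hcard : ({u1, u2, u3, u4} : Finset V).card = 4 := by
      rw [Finset.card_insert_of_notMem (by simp [d12, d13, d14]),
        Finset.card_insert_of_notMem (by simp [d23, d24]),
        Finset.card_insert_of_notMem (by simp [d34]),
        Finset.card_singleton]
    have hle3 := Finset.card_le_card hsub
    rw [hcard, SimpleGraph.card_neighborFinset_eq_degree, hreg x] at hle3
    omega
  apply le_antisymm
  · exact csSup_le ⟨4, h4⟩ hub
  · exact le_csSup ⟨4, hub⟩ h4
end

section
/- Let G be a 4-regular graph without induced C_4 that contains K_4 as a subgraph. Then Γ(G) = 5. -/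
namespace GreedyAux

variable {V : Type*} [Fintype V] (G : SimpleGraph V) (order : V → ℕ)

/-- One greedy step: the color to assign at position `n`, given the prior
coloring `f` (indexed by positions). -/
noncomputable def gval (f : ℕ → ℕ) (n : ℕ) : ℕ :=
  if h : ∃ v, order v = n then
    sInf {m | 1 ≤ m ∧ ∀ u, G.Adj h.choose u → order u < n → f (order u) ≠ m}
  else 0

/-- Iterated greedy prefix colorings. -/
noncomputable def gF : ℕ → (ℕ → ℕ)
  | 0 => fun _ => 0
  | n + 1 => fun k => if k < n then gF n k else if k = n then gval G order (gF n) n else 0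

/-- The greedy coloring, by position. -/
noncomputable def col (n : ℕ) : ℕ := gF G order (n + 1) n

lemma gF_stable : ∀ {m n k : ℕ}, k < m → m ≤ n → gF G order n k = gF G order m k := by
  intro m n
  induction n with
  | zero => intro k hk hm; omega
  | succ n ih =>
    intro k hk hm
    rcases Nat.eq_or_lt_of_le hm with h | h
    · rw [h]
    · have hmn : m ≤ n := by omega
      have hkn : k < n := by omega
      show (if k < n then gF G order n k else _) = _
      rw [if_pos hkn, ih hk hmn]

lemma col_eq_gF {n k : ℕ} (h : k < n) : gF G order n k = col G order k :=
  gF_stable G order (Nat.lt_succ_self k) h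

lemma gval_congr (f g : ℕ → ℕ) (n : ℕ) (h : ∀ k, k < n → f k = g k) :
    gval G order f n = gval G order g n := by
  unfold gval
  split
  · apply congrArg sInf
    ext m
    refine and_congr_right fun _ => ?_
    constructor <;> intro hh u hu hlt
    · rw [← h _ hlt]; exact hh u hu hlt
    · rw [h _ hlt]; exact hh u hu hlt
  · rfl

lemma col_eq (n : ℕ) :
    col G order n = (if h : ∃ v, order v = n then
      sInf {m | 1 ≤ m ∧ ∀ u, G.Adj h.choose u → order u < n → col G order (order u) ≠ m}
    else 0) := by
  show gF G order (n+1) n = _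
  have h1 : gF G order (n+1) n = gval G order (gF G order n) n := by
    show (if n < n then _ else if n = n then _ else 0) = _
    rw [if_neg (lt_irrefl n), if_pos rfl]
  rw [h1, gval_congr G order _ (col G order) n (fun k hk => col_eq_gF G order hk)]
  rfl

/-- The greedy coloring as a vertex coloring. -/
noncomputable def gcol (v : V) : ℕ := col G order (order v)

lemma gcol_spec (hinj : Function.Injective order) (v : V) :
    gcol G order v = sInf {m | 1 ≤ m ∧ ∀ u, G.Adj v u → order u < order v →
      gcol G order u ≠ m} := by
  unfold gcol
  rw [col_eq]
  have hex : ∃ u, order u = order v := ⟨v, rfl⟩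
  rw [dif_pos hex]
  have hv : hex.choose = v := hinj hex.choose_spec
  rw [hv]

lemma gcol_set_nonempty (v : V) :
    {m | 1 ≤ m ∧ ∀ u, G.Adj v u → order u < order v → gcol G order u ≠ m}.Nonempty := by
  classical
  refine ⟨(Finset.univ.sup (fun u => gcol G order u)) + 1, ?_, ?_⟩
  · omega
  · intro u _ _ h
    have : gcol G order u ≤ Finset.univ.sup (fun u => gcol G order u) :=
      Finset.le_sup (Finset.mem_univ u)
    omega

lemma gcol_pos (hinj : Function.Injective order) (v : V) : 1 ≤ gcol G order v := by
  have := Nat.sInf_mem (gcol_set_nonempty G order v)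
  rw [← gcol_spec G order hinj v] at this
  exact this.1

lemma gcol_proper_aux (hinj : Function.Injective order) (v u : V) (h : G.Adj v u)
    (hlt : order u < order v) : gcol G order u ≠ gcol G order v := by
  have hm := Nat.sInf_mem (gcol_set_nonempty G order v)
  rw [← gcol_spec G order hinj v] at hm
  exact hm.2 u h hlt

lemma gcol_proper (hinj : Function.Injective order) (v w : V) (h : G.Adj v w) :
    gcol G order v ≠ gcol G order w := by
  have hne : order v ≠ order w := fun he => G.ne_of_adj h (hinj he)
  rcases lt_or_gt_of_ne hne with hlt | hlt
  · exact gcol_proper_aux G order hinj w v h.symm hlt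
  · exact (gcol_proper_aux G order hinj v w h hlt).symm

lemma gcol_grundy (hinj : Function.Injective order) (v : V) (m : ℕ) (h1 : 1 ≤ m)
    (h2 : m < gcol G order v) :
    ∃ u, G.Adj v u ∧ order u < order v ∧ gcol G order u = m := by
  have hm : m ∉ {m | 1 ≤ m ∧ ∀ u, G.Adj v u → order u < order v → gcol G order u ≠ m} := by
    intro hmem
    have := Nat.sInf_le hmem
    rw [← gcol_spec G order hinj v] at this
    omega
  simp only [Set.mem_setOf_eq, not_and, not_forall] at hm
  obtain ⟨u, hu, hlt, hcu⟩ := hm h1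
  exact ⟨u, hu, hlt, by simpa using hcu⟩

section Order

variable {W : Type*} [DecidableEq W] (a' b' c' d' a b c d : W) (ι : W → ℕ)

/-- Order with designated prefix. -/
def aorder (v : W) : ℕ :=
  if v = a' then 0 else if v = b' then 1 else if v = c' then 2 else if v = d' then 3
  else if v = a then 4 else if v = b then 5 else if v = c then 6 else if v = d then 7
  else 8 + ι v

set_option maxHeartbeats 1600000 in
lemma aorder_inj (hι : Function.Injective ι) :
    Function.Injective (aorder a' b' c' d' a b c d ι) := by
  intro u v h
  unfold aorder at h
  split_ifs at h <;> first | omega | (subst_vars; rfl) | (exact hι (by omega))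

lemma aorder_lt1 {v : W} (h : aorder a' b' c' d' a b c d ι v < 1) : v = a' := by
  unfold aorder at h; split_ifs at h <;> first | tauto | omega

lemma aorder_lt2 {v : W} (h : aorder a' b' c' d' a b c d ι v < 2) : v = a' ∨ v = b' := by
  unfold aorder at h; split_ifs at h <;> first | tauto | omega

lemma aorder_lt3 {v : W} (h : aorder a' b' c' d' a b c d ι v < 3) :
    v = a' ∨ v = b' ∨ v = c' := by
  unfold aorder at h; split_ifs at h <;> first | tauto | omega

lemma aorder_va' : aorder a' b' c' d' a b c d ι a' = 0 := by simp [aorder]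

lemma aorder_vb'_lt4 : aorder a' b' c' d' a b c d ι b' < 4 := by
  unfold aorder; split_ifs <;> first | omega | simp_all

lemma aorder_vc'_lt4 : aorder a' b' c' d' a b c d ι c' < 4 := by
  unfold aorder; split_ifs <;> first | omega | simp_all

lemma aorder_vd'_lt4 : aorder a' b' c' d' a b c d ι d' < 4 := by
  unfold aorder; split_ifs <;> first | omega | simp_all

lemma aorder_vb' (h : b' ≠ a') : aorder a' b' c' d' a b c d ι b' = 1 := by
  simp [aorder, h]

lemma aorder_vc' (h1 : c' ≠ a') (h2 : c' ≠ b') :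
    aorder a' b' c' d' a b c d ι c' = 2 := by simp [aorder, h1, h2]

lemma aorder_vd' (h1 : d' ≠ a') (h2 : d' ≠ b') (h3 : d' ≠ c') :
    aorder a' b' c' d' a b c d ι d' = 3 := by simp [aorder, h1, h2, h3]

lemma aorder_va (h1 : a ≠ a') (h2 : a ≠ b') (h3 : a ≠ c') (h4 : a ≠ d') :
    aorder a' b' c' d' a b c d ι a = 4 := by simp [aorder, h1, h2, h3, h4]

lemma aorder_vb (h1 : b ≠ a') (h2 : b ≠ b') (h3 : b ≠ c') (h4 : b ≠ d') (h5 : b ≠ a) :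
    aorder a' b' c' d' a b c d ι b = 5 := by simp [aorder, h1, h2, h3, h4, h5]

lemma aorder_vc (h1 : c ≠ a') (h2 : c ≠ b') (h3 : c ≠ c') (h4 : c ≠ d') (h5 : c ≠ a)
    (h6 : c ≠ b) : aorder a' b' c' d' a b c d ι c = 6 := by
  simp [aorder, h1, h2, h3, h4, h5, h6]

lemma aorder_vd (h1 : d ≠ a') (h2 : d ≠ b') (h3 : d ≠ c') (h4 : d ≠ d') (h5 : d ≠ a)
    (h6 : d ≠ b) (h7 : d ≠ c) : aorder a' b' c' d' a b c d ι d = 7 := by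
  simp [aorder, h1, h2, h3, h4, h5, h6, h7]

end Order

end GreedyAux



variable {V : Type*}

theorem fourRegular_c4Free_with_K4_grundy {V : Type*} [Fintype V] [Nonempty V]
    (G : SimpleGraph V) [DecidableRel G.Adj]
    (hreg : G.IsRegularOfDegree 4) (hC4 : ¬ HasInducedC4 G)
    (hK4 : ∃ a b c d : V, G.Adj a b ∧ G.Adj a c ∧ G.Adj a d ∧ G.Adj b c ∧
      G.Adj b d ∧ G.Adj c d) :
    grundy G = 5 := by
  classical
  obtain ⟨a, b, c, d, hab, hac, had, hbc, hbd, hcd⟩ := hK4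
  -- counting bound: no vertex has neighbors of 5 distinct colors
  have count : ∀ (c0 : V → ℕ) (v : V),
      (∀ m, 1 ≤ m → m ≤ 5 → ∃ u, G.Adj v u ∧ c0 u = m) → False := by
    intro c0 v h
    set g : ℕ → V := fun m => if hm : 1 ≤ m ∧ m ≤ 5 then (h m hm.1 hm.2).choose else v with hg
    have hspec : ∀ m ∈ Finset.Icc 1 5, G.Adj v (g m) ∧ c0 (g m) = m := by
      intro m hm
      rw [Finset.mem_Icc] at hm
      have hm' : 1 ≤ m ∧ m ≤ 5 := hm
      simp only [hg, dif_pos hm']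
      exact (h m hm'.1 hm'.2).choose_spec
    have hmaps : ∀ m ∈ Finset.Icc 1 5, g m ∈ G.neighborFinset v := by
      intro m hm
      rw [SimpleGraph.mem_neighborFinset]
      exact (hspec m hm).1
    have hinj : Set.InjOn g (Finset.Icc 1 5) := by
      intro m1 h1 m2 h2 he
      have e1 := (hspec m1 h1).2
      have e2 := (hspec m2 h2).2
      rw [he, e2] at e1
      exact e1.symm
    have hcard := Finset.card_le_card_of_injOn g hmaps hinj
    rw [Nat.card_Icc] at hcard
    have hdeg : (G.neighborFinset v).card = 4 := by
      rw [G.card_neighborFinset_eq_degree]; exact hreg v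
    omega
  -- private-neighbor extraction
  have key : ∀ x p q r : V, p ≠ q → p ≠ r → q ≠ r → G.Adj x p → G.Adj x q → G.Adj x r →
      ∃ x', G.Adj x x' ∧ x' ≠ p ∧ x' ≠ q ∧ x' ≠ r ∧
        ∀ u, G.Adj x u → u = p ∨ u = q ∨ u = r ∨ u = x' := by
    intro x p q r hpq hpr hqr hxp hxq hxr
    have hcard : (G.neighborFinset x).card = 4 := by
      rw [G.card_neighborFinset_eq_degree]; exact hreg x
    have hsub : ({p, q, r} : Finset V) ⊆ G.neighborFinset x := by
      intro u hu
      simp only [Finset.mem_insert, Finset.mem_singleton] at hu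
      rcases hu with h | h | h <;> subst h <;>
        rw [SimpleGraph.mem_neighborFinset] <;> assumption
    have hc3 : ({p, q, r} : Finset V).card = 3 := by
      rw [Finset.card_insert_of_notMem (by simp [hpq, hpr]),
        Finset.card_insert_of_notMem (by simp [hqr]), Finset.card_singleton]
    have hnsub : ¬ (G.neighborFinset x ⊆ ({p, q, r} : Finset V)) := by
      intro hs
      have := Finset.card_le_card hs
      omega
    obtain ⟨x', hx'mem, hx'not⟩ := Finset.not_subset.mp hnsub
    simp only [Finset.mem_insert, Finset.mem_singleton, not_or] at hx'not
    obtain ⟨hne1, hne2, hne3⟩ := hx'not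
    have hsub2 : insert x' ({p, q, r} : Finset V) ⊆ G.neighborFinset x := by
      intro u hu
      rcases Finset.mem_insert.mp hu with h | h
      · subst h; exact hx'mem
      · exact hsub h
    have hc4 : (insert x' ({p, q, r} : Finset V)).card = 4 := by
      rw [Finset.card_insert_of_notMem (by simp [hne1, hne2, hne3]), hc3]
    have heq : insert x' ({p, q, r} : Finset V) = G.neighborFinset x :=
      Finset.eq_of_subset_of_card_le hsub2 (by omega)
    refine ⟨x', (SimpleGraph.mem_neighborFinset G x x').mp hx'mem, hne1, hne2, hne3, ?_⟩
    intro u hu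
    have : u ∈ insert x' ({p, q, r} : Finset V) := by
      rw [heq, SimpleGraph.mem_neighborFinset]; exact hu
    simp only [Finset.mem_insert, Finset.mem_singleton] at this
    tauto
  obtain ⟨a', haa', ha'b, ha'c, ha'd, haN⟩ :=
    key a b c d (G.ne_of_adj hbc) (G.ne_of_adj hbd) (G.ne_of_adj hcd) hab hac had
  obtain ⟨b', hbb', hb'a, hb'c, hb'd, hbN⟩ :=
    key b a c d (G.ne_of_adj hac) (G.ne_of_adj had) (G.ne_of_adj hcd) hab.symm hbc hbd
  obtain ⟨c', hcc', hc'a, hc'b, hc'd, hcN⟩ :=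
    key c a b d (G.ne_of_adj hab) (G.ne_of_adj had) (G.ne_of_adj hbd) hac.symm hbc.symm hcd
  obtain ⟨d', hdd', hd'a, hd'b, hd'c, hdN⟩ :=
    key d a b c (G.ne_of_adj hab) (G.ne_of_adj hac) (G.ne_of_adj hbc) had.symm hbd.symm hcd.symm
  have ha'a : a' ≠ a := (G.ne_of_adj haa').symm
  have hb'b : b' ≠ b := (G.ne_of_adj hbb').symm
  have hc'c : c' ≠ c := (G.ne_of_adj hcc').symm
  have hd'd : d' ≠ d := (G.ne_of_adj hdd').symm
  -- cross non-adjacency helper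
  have cross : ∀ (x x' n1 n2 n3 y' : V),
      (∀ u, G.Adj x u → u = n1 ∨ u = n2 ∨ u = n3 ∨ u = x') →
      y' ≠ n1 → y' ≠ n2 → y' ≠ n3 → y' ≠ x' → ¬ G.Adj x y' := by
    intro x x' n1 n2 n3 y' hN h1 h2 h3 h4 h
    rcases hN y' h with h' | h' | h' | h'
    exacts [h1 h', h2 h', h3 h', h4 h']
  -- induced C4 builder
  have nonadj : ∀ x y x' y' : V, G.Adj x y → G.Adj x x' → G.Adj y y' → x' ≠ y' →
      x ≠ y' → y ≠ x' → ¬ G.Adj x y' → ¬ G.Adj y x' → ¬ G.Adj x' y' := by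
    intro x y x' y' hxy hxx hyy hne hxy1 hyx1 hnxy' hnyx' hadj
    exact hC4 ⟨x, x', y', y, G.ne_of_adj hxx, hxy1, G.ne_of_adj hxy, hne,
      Ne.symm hyx1, (G.ne_of_adj hyy).symm, hxx, hadj, hyy.symm, hxy.symm, hnxy',
      fun h => hnyx' h.symm⟩
  -- distinct privates are non-adjacent
  have hPab : a' ≠ b' → ¬ G.Adj a' b' := fun hne =>
    nonadj a b a' b' hab haa' hbb' hne (Ne.symm hb'a) (Ne.symm ha'b)
      (cross a a' b c d b' haN hb'b hb'c hb'd (fun h => hne h.symm))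
      (cross b b' a c d a' hbN ha'a ha'c ha'd hne)
  have hPac : a' ≠ c' → ¬ G.Adj a' c' := fun hne =>
    nonadj a c a' c' hac haa' hcc' hne (Ne.symm hc'a) (Ne.symm ha'c)
      (cross a a' b c d c' haN hc'b hc'c hc'd (fun h => hne h.symm))
      (cross c c' a b d a' hcN ha'a ha'b ha'd hne)
  have hPad : a' ≠ d' → ¬ G.Adj a' d' := fun hne =>
    nonadj a d a' d' had haa' hdd' hne (Ne.symm hd'a) (Ne.symm ha'd)
      (cross a a' b c d d' haN hd'b hd'c hd'd (fun h => hne h.symm))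
      (cross d d' a b c a' hdN ha'a ha'b ha'c hne)
  have hPbc : b' ≠ c' → ¬ G.Adj b' c' := fun hne =>
    nonadj b c b' c' hbc hbb' hcc' hne (Ne.symm hc'b) (Ne.symm hb'c)
      (cross b b' a c d c' hbN hc'a hc'c hc'd (fun h => hne h.symm))
      (cross c c' a b d b' hcN hb'a hb'b hb'd hne)
  have hPbd : b' ≠ d' → ¬ G.Adj b' d' := fun hne =>
    nonadj b d b' d' hbd hbb' hdd' hne (Ne.symm hd'b) (Ne.symm hb'd)
      (cross b b' a c d d' hbN hd'a hd'c hd'd (fun h => hne h.symm))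
      (cross d d' a b c b' hdN hb'a hb'b hb'c hne)
  have hPcd : c' ≠ d' → ¬ G.Adj c' d' := fun hne =>
    nonadj c d c' d' hcd hcc' hdd' hne (Ne.symm hd'c) (Ne.symm hc'd)
      (cross c c' a b d d' hcN hd'a hd'b hd'd (fun h => hne h.symm))
      (cross d d' a b c c' hdN hc'a hc'b hc'c hne)
  -- set up the greedy order
  set ι : V → ℕ := fun v => ((Fintype.equivFin V) v : ℕ) with hι
  have hιinj : Function.Injective ι := by
    intro u v h
    exact (Fintype.equivFin V).injective (Fin.ext h)
  set ord : V → ℕ := GreedyAux.aorder a' b' c' d' a b c d ι with hordd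
  have hordinj : Function.Injective ord := GreedyAux.aorder_inj a' b' c' d' a b c d ι hιinj
  set C : V → ℕ := GreedyAux.gcol G ord with hC
  have hspec : ∀ v : V, C v = sInf {m | 1 ≤ m ∧ ∀ u, G.Adj v u → ord u < ord v → C u ≠ m} :=
    GreedyAux.gcol_spec G ord hordinj
  have hpos : ∀ v, 1 ≤ C v := GreedyAux.gcol_pos G ord hordinj
  have hproper : ∀ v w, G.Adj v w → C v ≠ C w := GreedyAux.gcol_proper G ord hordinj
  have hgrundy : ∀ v m, 1 ≤ m → m < C v → ∃ u, G.Adj v u ∧ ord u < ord v ∧ C u = m :=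
    fun v m h1 h2 => GreedyAux.gcol_grundy G ord hordinj v m h1 h2
  have sInf_eval : ∀ (S : Set ℕ) (k : ℕ), k ∈ S → (∀ m, m < k → m ∉ S) → sInf S = k := by
    intro S k hk hm
    have h1 := Nat.sInf_le hk
    rcases Nat.lt_or_ge (sInf S) k with h | h
    · exact absurd (Nat.sInf_mem ⟨k, hk⟩) (hm _ h)
    · omega
  -- order values
  have horda' : ord a' = 0 := GreedyAux.aorder_va' a' b' c' d' a b c d ι
  have hordb'4 : ord b' < 4 := GreedyAux.aorder_vb'_lt4 a' b' c' d' a b c d ι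
  have hordc'4 : ord c' < 4 := GreedyAux.aorder_vc'_lt4 a' b' c' d' a b c d ι
  have hordd'4 : ord d' < 4 := GreedyAux.aorder_vd'_lt4 a' b' c' d' a b c d ι
  have horda : ord a = 4 := GreedyAux.aorder_va a' b' c' d' a b c d ι
    (G.ne_of_adj haa') (Ne.symm hb'a) (Ne.symm hc'a) (Ne.symm hd'a)
  have hordb : ord b = 5 := GreedyAux.aorder_vb a' b' c' d' a b c d ι
    (Ne.symm ha'b) (G.ne_of_adj hbb') (Ne.symm hc'b) (Ne.symm hd'b) (G.ne_of_adj hab.symm)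
  have hordc : ord c = 6 := GreedyAux.aorder_vc a' b' c' d' a b c d ι
    (Ne.symm ha'c) (Ne.symm hb'c) (G.ne_of_adj hcc') (Ne.symm hd'c)
    (G.ne_of_adj hac.symm) (G.ne_of_adj hbc.symm)
  have hordd2 : ord d = 7 := GreedyAux.aorder_vd a' b' c' d' a b c d ι
    (Ne.symm ha'd) (Ne.symm hb'd) (Ne.symm hc'd) (G.ne_of_adj hdd')
    (G.ne_of_adj had.symm) (G.ne_of_adj hbd.symm) (G.ne_of_adj hcd.symm)
  have hordb'1 : b' ≠ a' → ord b' = 1 := fun h => by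
    rw [hordd]; exact GreedyAux.aorder_vb' a' b' c' d' a b c d ι h
  have hordc'2 : c' ≠ a' → c' ≠ b' → ord c' = 2 := fun h1 h2 => by
    rw [hordd]; exact GreedyAux.aorder_vc' a' b' c' d' a b c d ι h1 h2
  have hordd'3 : d' ≠ a' → d' ≠ b' → d' ≠ c' → ord d' = 3 := fun h1 h2 h3 => by
    rw [hordd]; exact GreedyAux.aorder_vd' a' b' c' d' a b c d ι h1 h2 h3
  have hlt1 : ∀ u : V, ord u < 1 → u = a' := fun u h =>
    GreedyAux.aorder_lt1 a' b' c' d' a b c d ι (by rw [← hordd]; exact h)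
  have hlt2 : ∀ u : V, ord u < 2 → u = a' ∨ u = b' := fun u h =>
    GreedyAux.aorder_lt2 a' b' c' d' a b c d ι (by rw [← hordd]; exact h)
  have hlt3 : ∀ u : V, ord u < 3 → u = a' ∨ u = b' ∨ u = c' := fun u h =>
    GreedyAux.aorder_lt3 a' b' c' d' a b c d ι (by rw [← hordd]; exact h)
  -- colors of the private neighbors
  have hCa' : C a' = 1 := by
    rw [hspec a']
    apply sInf_eval
    · refine ⟨le_refl 1, ?_⟩
      intro u hu hlt
      rw [horda'] at hlt
      omega
    · intro m hm hmem
      have := hmem.1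
      omega
  have hCb' : C b' = 1 := by
    by_cases hba : b' = a'
    · rw [hba]; exact hCa'
    rw [hspec b']
    apply sInf_eval
    · refine ⟨le_refl 1, ?_⟩
      intro u hu hlt
      rw [hordb'1 hba] at hlt
      have := hlt1 u hlt
      subst this
      exact absurd hu.symm (hPab (Ne.symm hba))
    · intro m hm hmem
      have := hmem.1
      omega
  have hCc' : C c' = 1 := by
    by_cases hca : c' = a'
    · rw [hca]; exact hCa'
    by_cases hcb : c' = b'
    · rw [hcb]; exact hCb'
    rw [hspec c']
    apply sInf_eval
    · refine ⟨le_refl 1, ?_⟩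
      intro u hu hlt
      rw [hordc'2 hca hcb] at hlt
      rcases hlt2 u hlt with h | h <;> subst h
      · exact absurd hu.symm (hPac (Ne.symm hca))
      · exact absurd hu.symm (hPbc (Ne.symm hcb))
    · intro m hm hmem
      have := hmem.1
      omega
  have hCd' : C d' = 1 := by
    by_cases hda : d' = a'
    · rw [hda]; exact hCa'
    by_cases hdb : d' = b'
    · rw [hdb]; exact hCb'
    by_cases hdc : d' = c'
    · rw [hdc]; exact hCc'
    rw [hspec d']
    apply sInf_eval
    · refine ⟨le_refl 1, ?_⟩
      intro u hu hlt
      rw [hordd'3 hda hdb hdc] at hlt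
      rcases hlt3 u hlt with h | h | h <;> subst h
      · exact absurd hu.symm (hPad (Ne.symm hda))
      · exact absurd hu.symm (hPbd (Ne.symm hdb))
      · exact absurd hu.symm (hPcd (Ne.symm hdc))
    · intro m hm hmem
      have := hmem.1
      omega
  -- colors of the clique
  have hCa : C a = 2 := by
    rw [hspec a]
    apply sInf_eval
    · refine ⟨by omega, ?_⟩
      intro u hu hlt
      rw [horda] at hlt
      rcases haN u hu with rfl | rfl | rfl | rfl
      · rw [hordb] at hlt; omega
      · rw [hordc] at hlt; omega
      · rw [hordd2] at hlt; omega
      · rw [hCa']; omega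
    · intro m hm hmem
      obtain ⟨h1, h2⟩ := hmem
      have hm1 : m = 1 := by omega
      exact h2 a' haa' (by rw [horda', horda]; omega) (by rw [hCa', hm1])
  have hCb : C b = 3 := by
    rw [hspec b]
    apply sInf_eval
    · refine ⟨by omega, ?_⟩
      intro u hu hlt
      rw [hordb] at hlt
      rcases hbN u hu with rfl | rfl | rfl | rfl
      · rw [hCa]; omega
      · rw [hordc] at hlt; omega
      · rw [hordd2] at hlt; omega
      · rw [hCb']; omega
    · intro m hm hmem
      obtain ⟨h1, h2⟩ := hmem
      have hm1 : m = 1 ∨ m = 2 := by omega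
      rcases hm1 with rfl | rfl
      · exact h2 b' hbb' (by rw [hordb]; omega) hCb'
      · exact h2 a hab.symm (by rw [horda, hordb]; omega) hCa
  have hCc : C c = 4 := by
    rw [hspec c]
    apply sInf_eval
    · refine ⟨by omega, ?_⟩
      intro u hu hlt
      rw [hordc] at hlt
      rcases hcN u hu with rfl | rfl | rfl | rfl
      · rw [hCa]; omega
      · rw [hCb]; omega
      · rw [hordd2] at hlt; omega
      · rw [hCc']; omega
    · intro m hm hmem
      obtain ⟨h1, h2⟩ := hmem
      have hm1 : m = 1 ∨ m = 2 ∨ m = 3 := by omega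
      rcases hm1 with rfl | rfl | rfl
      · exact h2 c' hcc' (by rw [hordc]; omega) hCc'
      · exact h2 a hac.symm (by rw [horda, hordc]; omega) hCa
      · exact h2 b hbc.symm (by rw [hordb, hordc]; omega) hCb
  have hCd : C d = 5 := by
    rw [hspec d]
    apply sInf_eval
    · refine ⟨by omega, ?_⟩
      intro u hu hlt
      rcases hdN u hu with rfl | rfl | rfl | rfl
      · rw [hCa]; omega
      · rw [hCb]; omega
      · rw [hCc]; omega
      · rw [hCd']; omega
    · intro m hm hmem
      obtain ⟨h1, h2⟩ := hmem
      have hm1 : m = 1 ∨ m = 2 ∨ m = 3 ∨ m = 4 := by omega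
      rcases hm1 with rfl | rfl | rfl | rfl
      · exact h2 d' hdd' (by rw [hordd2]; omega) hCd'
      · exact h2 a had.symm (by rw [horda, hordd2]; omega) hCa
      · exact h2 b hbd.symm (by rw [hordb, hordd2]; omega) hCb
      · exact h2 c hcd.symm (by rw [hordc, hordd2]; omega) hCc
  -- the greedy coloring is bounded by 5
  have hCle : ∀ v, C v ≤ 5 := by
    intro v
    by_contra h
    push_neg at h
    apply count C v
    intro m h1 h5
    obtain ⟨u, hu, _, hcu⟩ := hgrundy v m h1 (by omega)
    exact ⟨u, hu, hcu⟩
  -- G is Grundy 5-colorable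
  have h5mem : GrundyColorable G 5 := by
    refine ⟨C, ⟨hpos, hproper, ?_⟩, hCle, ?_⟩
    · intro v j hj hlt
      obtain ⟨u, hu, _, hcu⟩ := hgrundy v j hj hlt
      exact ⟨u, hu, hcu⟩
    · intro j h1 h5
      interval_cases j
      exacts [⟨a', hCa'⟩, ⟨a, hCa⟩, ⟨b, hCb⟩, ⟨c, hCc⟩, ⟨d, hCd⟩]
  -- upper bound
  have hub : ∀ k ∈ {k | GrundyColorable G k}, k ≤ 5 := by
    rintro k ⟨c0, ⟨⟨hpos0, hprop0, hgr0⟩, hle0, hsurj0⟩⟩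
    by_contra h
    push_neg at h
    obtain ⟨v, hv⟩ := hsurj0 k (by omega) le_rfl
    apply count c0 v
    intro m h1 h5
    exact hgr0 v m h1 (by omega)
  exact le_antisymm (csSup_le ⟨5, h5mem⟩ hub) (le_csSup ⟨5, hub⟩ h5mem)
end
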